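/- arXiv:1812.05025 — 2 statements merged into one kernel-verified Lean document; each statement's English description precedes it below -/
import Mathlib

section
/- Let K be Stonian and the Boolean algebra of idempotents of C(K) be Bade complete on the Banach C(K)-module X, with m injective. Then K is hyperstonian and m is continuous from the weak-star topology on C(K) to the weak operator topology on L(X). -/
open Filter Topology

/-- The Boolean algebra of idempotents of `C(K)` is Bade complete on `X`. -/
def BadeComplete {K X : Type*} [TopologicalSpace K] [CompactSpace K] [T2Space K]
    [NormedAddCommGroup X] [NormedSpace ℝ X] [CompleteSpace X]
    (m : C(K, ℝ) →ₐ[ℝ] (X →L[ℝ] X)) : Prop :=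
  ∀ S : Set C(K, ℝ), (∀ e ∈ S, e * e = e) → S.Nonempty → DirectedOn (· ≤ ·) S →
    ∀ E : C(K, ℝ), E * E = E → IsLUB S E →
      ∀ x : X, Filter.Tendsto (fun e : S => m (e : C(K, ℝ)) x) Filter.atTop (nhds (m E x))

/-- A bounded functional on `C(K)` is order continuous if it is continuous along
suprema of upward-directed sets. -/
def OrderContinuousFunc {K : Type*} [TopologicalSpace K] [CompactSpace K] [T2Space K]
    (φ : C(K, ℝ) →L[ℝ] ℝ) : Prop :=
  ∀ S : Set C(K, ℝ), S.Nonempty → DirectedOn (· ≤ ·) S → ∀ b : C(K, ℝ), IsLUB S b →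
    Filter.Tendsto (fun a : S => φ (a : C(K, ℝ))) Filter.atTop (nhds (φ b))

/-- `K` is hyperstonian: it is extremally disconnected (assumed separately) and the order
continuous functionals on `C(K)` separate points. -/
def SeparatesByNormalFunctionals (K : Type*) [TopologicalSpace K] [CompactSpace K]
    [T2Space K] : Prop :=
  ∀ a : C(K, ℝ), a ≠ 0 → ∃ φ : C(K, ℝ) →L[ℝ] ℝ, OrderContinuousFunc φ ∧ φ a ≠ 0

/-- `m` is continuous from the weak-star topology of `C(K)` (tested against the order
continuous functionals, which form the predual when `K` is hyperstonian) to the weak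
operator topology of `L(X)`, stated via nets. -/
def WStarWOTContinuous {K X : Type*} [TopologicalSpace K] [CompactSpace K] [T2Space K]
    [NormedAddCommGroup X] [NormedSpace ℝ X] [CompleteSpace X]
    (m : C(K, ℝ) →ₐ[ℝ] (X →L[ℝ] X)) : Prop :=
  ∀ (ι : Type) (_ : Preorder ι) (f : ι → C(K, ℝ)) (a : C(K, ℝ)),
    (∀ φ : C(K, ℝ) →L[ℝ] ℝ, OrderContinuousFunc φ →
      Filter.Tendsto (fun i => φ (f i)) Filter.atTop (nhds (φ a))) →
    ∀ (x : X) (x' : X →L[ℝ] ℝ),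
      Filter.Tendsto (fun i => x' (m (f i) x)) Filter.atTop (nhds (x' (m a x)))

section Aux

variable {K : Type*} [TopologicalSpace K]

/-- The indicator of a clopen set as a continuous map. -/
noncomputable def indCM (C : Set K) (hC : IsClopen C) : C(K, ℝ) :=
  ⟨C.indicator 1, continuous_indicator (by simp [hC]) <| continuous_const.continuousOn⟩

lemma indCM_apply_mem {C : Set K} (hC : IsClopen C) {k : K} (h : k ∈ C) :
    indCM C hC k = 1 := by
  simp [indCM, Set.indicator_of_mem h]

lemma indCM_apply_not_mem {C : Set K} (hC : IsClopen C) {k : K} (h : k ∉ C) :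
    indCM C hC k = 0 := by
  simp [indCM, Set.indicator_of_notMem h]

lemma indCM_mul_self (C : Set K) (hC : IsClopen C) : indCM C hC * indCM C hC = indCM C hC := by
  ext k
  simp only [ContinuousMap.mul_apply]
  by_cases h : k ∈ C
  · rw [indCM_apply_mem hC h]; ring
  · rw [indCM_apply_not_mem hC h]; ring

lemma indCM_nonneg (C : Set K) (hC : IsClopen C) : 0 ≤ indCM C hC := by
  rw [ContinuousMap.le_def]
  intro k
  by_cases h : k ∈ C
  · rw [indCM_apply_mem hC h]; norm_num
  · rw [indCM_apply_not_mem hC h]; norm_num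

lemma indCM_mono {C D : Set K} (hC : IsClopen C) (hD : IsClopen D) (h : C ⊆ D) :
    indCM C hC ≤ indCM D hD := by
  rw [ContinuousMap.le_def]
  intro k
  by_cases hk : k ∈ C
  · rw [indCM_apply_mem hC hk, indCM_apply_mem hD (h hk)]
  · rw [indCM_apply_not_mem hC hk]
    by_cases hk' : k ∈ D
    · rw [indCM_apply_mem hD hk']; norm_num
    · rw [indCM_apply_not_mem hD hk']

end Aux

theorem keyTendsto {K X : Type*} [TopologicalSpace K] [CompactSpace K] [T2Space K]
    [ExtremallyDisconnected K]
    [NormedAddCommGroup X] [NormedSpace ℝ X] [CompleteSpace X]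
    (m : C(K, ℝ) →ₐ[ℝ] (X →L[ℝ] X))
    (hm : ∀ a : C(K, ℝ), ‖m a‖ = ‖a‖)
    (hBade : BadeComplete m)
    (S : Set C(K, ℝ)) (hS : S.Nonempty) (hdir : DirectedOn (· ≤ ·) S)
    (b : C(K, ℝ)) (hb : IsLUB S b) (x : X) :
    Tendsto (fun a : S => m (a : C(K, ℝ)) x) atTop (𝓝 (m b x)) := by
  haveI : Nonempty ↥S := hS.to_subtype
  haveI : IsDirected ↥S (· ≤ ·) := ⟨fun a c => by
    obtain ⟨d, hd, h1, h2⟩ := hdir a a.2 c c.2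
    exact ⟨⟨d, hd⟩, h1, h2⟩⟩
  rw [Metric.tendsto_nhds]
  intro ε' hε'
  set ε : ℝ := ε' / (2 * (‖x‖ + 1)) with hεdef
  have hε : 0 < ε := by positivity
  have hUopen : ∀ a : C(K, ℝ), IsOpen {k | ε < (b - a) k} := fun a =>
    isOpen_lt continuous_const (b - a).continuous
  set C : C(K, ℝ) → Set K := fun a => closure {k | ε < (b - a) k} with hCdef
  have hCclopen : ∀ a, IsClopen (C a) := fun a =>
    ⟨isClosed_closure, ExtremallyDisconnected.open_closure _ (hUopen a)⟩
  set e : C(K, ℝ) → C(K, ℝ) := fun a => indCM (C a) (hCclopen a) with hedef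
  have hemono : ∀ a a' : C(K, ℝ), a ≤ a' → e a' ≤ e a := by
    intro a a' h
    apply indCM_mono
    apply closure_mono
    intro k hk
    simp only [Set.mem_setOf_eq, ContinuousMap.sub_apply] at hk ⊢
    have := ContinuousMap.le_def.mp h k
    linarith
  have heidem : ∀ a, e a * e a = e a := fun a => indCM_mul_self _ _
  have hsmall : ∀ a ∈ S, ‖(b - a) * (1 - e a)‖ ≤ ε := by
    intro a ha
    rw [ContinuousMap.norm_le _ hε.le]
    intro k
    simp only [ContinuousMap.mul_apply, ContinuousMap.sub_apply, ContinuousMap.one_apply, hedef]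
    by_cases hk : k ∈ C a
    · rw [indCM_apply_mem _ hk]; simp [hε.le]
    · rw [indCM_apply_not_mem _ hk]
      simp only [sub_zero, mul_one]
      have h1 : a k ≤ b k := ContinuousMap.le_def.mp (hb.1 ha) k
      have h2 : ¬ ε < (b - a) k := fun h => hk (subset_closure h)
      simp only [ContinuousMap.sub_apply, not_lt] at h2
      rw [Real.norm_eq_abs, abs_le]
      constructor <;> linarith
  set S' : Set C(K, ℝ) := (fun a => 1 - e a) '' S with hS'def
  have hS'ne : S'.Nonempty := hS.image _
  have hS'idem : ∀ c ∈ S', c * c = c := by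
    rintro c ⟨a, ha, rfl⟩
    linear_combination heidem a
  have hS'dir : DirectedOn (· ≤ ·) S' := by
    rintro c ⟨a, ha, rfl⟩ c' ⟨a', ha', rfl⟩
    obtain ⟨d, hd, h1, h2⟩ := hdir a ha a' ha'
    exact ⟨1 - e d, ⟨d, hd, rfl⟩, sub_le_sub_left (hemono _ _ h1) 1,
      sub_le_sub_left (hemono _ _ h2) 1⟩
  have hlub : IsLUB S' 1 := by
    constructor
    · rintro c ⟨a, ha, rfl⟩
      have h0 := indCM_nonneg (C a) (hCclopen a)
      calc (1 : C(K, ℝ)) - e a ≤ 1 - 0 := by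
            exact sub_le_sub_left h0 1
        _ = 1 := sub_zero 1
    · intro g hg
      rw [ContinuousMap.le_def]
      intro k
      set W : Set K := ⋃ a ∈ S, (C a)ᶜ with hW
      have hWopen : IsOpen W := isOpen_biUnion fun a _ => (hCclopen a).1.isOpen_compl
      have hgW : W ⊆ {k' | (1 : ℝ) ≤ g k'} := by
        intro k' hk'
        simp only [hW, Set.mem_iUnion, Set.mem_compl_iff] at hk'
        obtain ⟨a, ha, hk'⟩ := hk'
        have hle := ContinuousMap.le_def.mp (hg ⟨a, ha, rfl⟩) k'
        rw [ContinuousMap.sub_apply, ContinuousMap.one_apply] at hle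
        simp only [hedef] at hle
        rw [indCM_apply_not_mem _ hk', sub_zero] at hle
        exact hle
      have hWdense : closure W = Set.univ := by
        by_contra hne
        have hex : ∃ k₀, k₀ ∉ closure W := by
          by_contra hcon
          push_neg at hcon
          exact hne (Set.eq_univ_of_forall hcon)
        obtain ⟨k₀, hk₀⟩ := hex
        have hVclopen : IsClopen (closure W)ᶜ :=
          ⟨(ExtremallyDisconnected.open_closure _ hWopen).isClosed_compl,
            isClosed_closure.isOpen_compl⟩
        set h : C(K, ℝ) := b - ε • indCM (closure W)ᶜ hVclopen with hhdef
        have hub : h ∈ upperBounds S := by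
          intro a ha
          rw [ContinuousMap.le_def]
          intro k'
          by_cases hk' : k' ∈ (closure W)ᶜ
          · have hkC : k' ∈ C a := by
              by_contra hkc
              exact hk' (subset_closure (Set.mem_biUnion ha hkc))
            have hεle : ε ≤ (b - a) k' := by
              have hcl : C a ⊆ {k | ε ≤ (b - a) k} := by
                apply closure_minimal ?_ (isClosed_le continuous_const (b - a).continuous)
                intro k hk
                simp only [Set.mem_setOf_eq] at hk ⊢
                exact le_of_lt hk
              exact hcl hkC
            simp only [ContinuousMap.sub_apply] at hεle
            simp only [hhdef, ContinuousMap.sub_apply, ContinuousMap.smul_apply, smul_eq_mul]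
            rw [indCM_apply_mem _ hk']
            linarith
          · have h1 : a k' ≤ b k' := ContinuousMap.le_def.mp (hb.1 ha) k'
            simp only [hhdef, ContinuousMap.sub_apply, ContinuousMap.smul_apply, smul_eq_mul]
            rw [indCM_apply_not_mem _ hk']
            simpa using h1
        have hble := ContinuousMap.le_def.mp (hb.2 hub) k₀
        have hk₀' : k₀ ∈ (closure W)ᶜ := hk₀
        simp only [hhdef, ContinuousMap.sub_apply, ContinuousMap.smul_apply, smul_eq_mul] at hble
        rw [indCM_apply_mem _ hk₀'] at hble
        linarith
      have hcl : closure W ⊆ {k' | (1 : ℝ) ≤ g k'} :=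
        closure_minimal hgW (isClosed_le continuous_const g.continuous)
      have hk : k ∈ closure W := hWdense ▸ Set.mem_univ k
      simpa using hcl hk
  have hBt := hBade S' hS'idem hS'ne hS'dir 1 (one_mul 1) hlub x
  rw [map_one] at hBt
  haveI : Nonempty ↥S' := hS'ne.to_subtype
  haveI : IsDirected ↥S' (· ≤ ·) := ⟨fun a c => by
    obtain ⟨d, hd, h1, h2⟩ := hS'dir a a.2 c c.2
    exact ⟨⟨d, hd⟩, h1, h2⟩⟩
  set ψ : ↥S → ↥S' := fun a => ⟨1 - e a, ⟨a, a.2, rfl⟩⟩ with hψdef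
  have hψ : Tendsto ψ atTop atTop := by
    rw [atTop_basis.tendsto_right_iff]
    rintro ⟨c, a', ha', rfl⟩ -
    have hmem : {a : ↥S | (⟨a', ha'⟩ : ↥S) ≤ a} ∈ (atTop : Filter ↥S) := mem_atTop _
    filter_upwards [hmem] with a ha
    have hle : a' ≤ (a : C(K, ℝ)) := ha
    show (1 - e a' : C(K, ℝ)) ≤ 1 - e (a : C(K, ℝ))
    exact sub_le_sub_left (hemono _ _ hle) 1
  have h1 : Tendsto (fun a : ↥S => m ((1 : C(K, ℝ)) - e (a : C(K, ℝ))) x) atTop (𝓝 x) := by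
    have hc := hBt.comp hψ
    have heq : ((fun c : ↥S' => m (c : C(K, ℝ)) x) ∘ ψ)
        = fun a : ↥S => m ((1 : C(K, ℝ)) - e (a : C(K, ℝ))) x := rfl
    rw [heq] at hc
    simpa using hc
  have h0 : Tendsto (fun a : ↥S => m (e (a : C(K, ℝ))) x) atTop (𝓝 0) := by
    have h2 : ∀ a : ↥S, m (e (a : C(K, ℝ))) x = x - m ((1 : C(K, ℝ)) - e ↑a) x := by
      intro a
      rw [map_sub, map_one]
      simp [ContinuousLinearMap.sub_apply, ContinuousLinearMap.one_apply]
    simp only [h2]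
    have h3 : Tendsto (fun a : ↥S => x - m ((1 : C(K, ℝ)) - e (a : C(K, ℝ))) x) atTop
        (𝓝 (x - x)) := tendsto_const_nhds.sub h1
    rw [sub_self] at h3
    exact h3
  obtain ⟨a₁, ha₁⟩ := hS
  set M : ℝ := ‖b - a₁‖ with hMdef
  have hM : 0 ≤ M := norm_nonneg _
  have hev1 : ∀ᶠ a : ↥S in atTop, ‖m (e (a : C(K, ℝ))) x‖ < ε' / (4 * (M + 1)) := by
    have := Metric.tendsto_nhds.mp h0 (ε' / (4 * (M + 1))) (by positivity)
    filter_upwards [this] with a ha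
    simpa [dist_zero_right] using ha
  have hev2 : ∀ᶠ a : ↥S in atTop, (⟨a₁, ha₁⟩ : ↥S) ≤ a := eventually_ge_atTop _
  filter_upwards [hev1, hev2] with a hnorm hge
  rw [dist_eq_norm]
  have hab : (a : C(K, ℝ)) ≤ b := hb.1 a.2
  have hkey : m b x - m (a : C(K, ℝ)) x
      = m ((b - ↑a) * (1 - e ↑a)) x + (m (b - ↑a)) (m (e ↑a) x) := by
    have hring : ((b - ↑a) * (1 - e ↑a)) + (b - ↑a) * (e ↑a) = b - (a : C(K, ℝ)) := by ring
    have hsplit : m (b - (a : C(K, ℝ)))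
        = m ((b - ↑a) * (1 - e ↑a)) + m ((b - ↑a) * (e ↑a)) := by
      rw [← map_add, hring]
    have hmul : m ((b - (a : C(K, ℝ))) * (e ↑a)) x = (m (b - ↑a)) (m (e ↑a) x) := by
      rw [map_mul, ContinuousLinearMap.mul_apply]
    calc m b x - m (a : C(K, ℝ)) x = m (b - ↑a) x := by
          rw [map_sub, ContinuousLinearMap.sub_apply]
      _ = m ((b - ↑a) * (1 - e ↑a)) x + m ((b - ↑a) * (e ↑a)) x := by
          rw [hsplit, ContinuousLinearMap.add_apply]
      _ = m ((b - ↑a) * (1 - e ↑a)) x + (m (b - ↑a)) (m (e ↑a) x) := by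
          rw [hmul]
  have hbound1 : ‖m ((b - ↑a) * (1 - e ↑a)) x‖ ≤ ε' / 2 := by
    calc ‖m ((b - ↑a) * (1 - e ↑a)) x‖ ≤ ‖m ((b - ↑a) * (1 - e ↑a))‖ * ‖x‖ :=
          ContinuousLinearMap.le_opNorm _ _
      _ = ‖(b - ↑a) * (1 - e ↑a)‖ * ‖x‖ := by rw [hm]
      _ ≤ ε * ‖x‖ := mul_le_mul_of_nonneg_right (hsmall _ a.2) (norm_nonneg x)
      _ ≤ ε * (‖x‖ + 1) := by nlinarith [norm_nonneg x, hε.le]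
      _ = ε' / 2 := by
          rw [hεdef]
          have hx1 : ‖x‖ + 1 ≠ 0 := by positivity
          field_simp
  have hba : ‖b - (a : C(K, ℝ))‖ ≤ M := by
    rw [ContinuousMap.norm_le _ hM]
    intro k
    have hge' : a₁ ≤ (a : C(K, ℝ)) := hge
    have h1 : a₁ k ≤ (a : C(K, ℝ)) k := ContinuousMap.le_def.mp hge' k
    have h2 : (a : C(K, ℝ)) k ≤ b k := ContinuousMap.le_def.mp hab k
    have h3 := ContinuousMap.norm_coe_le_norm (b - a₁) k
    simp only [ContinuousMap.sub_apply, Real.norm_eq_abs] at h3 ⊢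
    rw [abs_of_nonneg (by linarith)]
    calc b k - (a : C(K, ℝ)) k ≤ b k - a₁ k := by linarith
      _ ≤ |b k - a₁ k| := le_abs_self _
      _ ≤ M := h3
  have hbound2 : ‖(m (b - ↑a)) (m (e ↑a) x)‖ ≤ ε' / 4 := by
    calc ‖(m (b - ↑a)) (m (e ↑a) x)‖ ≤ ‖m (b - (a : C(K, ℝ)))‖ * ‖m (e ↑a) x‖ :=
          ContinuousLinearMap.le_opNorm _ _
      _ = ‖b - (a : C(K, ℝ))‖ * ‖m (e ↑a) x‖ := by rw [hm]
      _ ≤ (M + 1) * (ε' / (4 * (M + 1))) := by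
          apply mul_le_mul (by linarith) hnorm.le (norm_nonneg _) (by linarith)
      _ = ε' / 4 := by
          have : M + 1 ≠ 0 := by positivity
          field_simp
  calc ‖m (a : C(K, ℝ)) x - m b x‖ = ‖m b x - m (a : C(K, ℝ)) x‖ := norm_sub_rev _ _
    _ ≤ ‖m ((b - ↑a) * (1 - e ↑a)) x‖ + ‖(m (b - ↑a)) (m (e ↑a) x)‖ := by
        rw [hkey]; exact norm_add_le _ _
    _ ≤ ε' / 2 + ε' / 4 := add_le_add hbound1 hbound2
    _ < ε' := by linarith

/-- If `K` is Stonian, `m` is injective and the idempotents are Bade complete on `X`,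
then `K` is hyperstonian (the order continuous functionals on `C(K)` separate points)
and `m` is (weak-star, weak-operator) continuous. -/
theorem stmt16 {K X : Type*} [TopologicalSpace K] [CompactSpace K] [T2Space K]
    [ExtremallyDisconnected K]
    [NormedAddCommGroup X] [NormedSpace ℝ X] [CompleteSpace X]
    (m : C(K, ℝ) →ₐ[ℝ] (X →L[ℝ] X))
    (hm : ∀ a : C(K, ℝ), ‖m a‖ = ‖a‖)
    (hinj : Function.Injective m)
    (hBade : BadeComplete m) :
    SeparatesByNormalFunctionals K ∧ WStarWOTContinuous m := by
  have hkey : ∀ (x : X) (x' : X →L[ℝ] ℝ), ∃ φ : C(K, ℝ) →L[ℝ] ℝ,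
      OrderContinuousFunc φ ∧ ∀ c, φ c = x' (m c x) := by
    intro x x'
    let T : C(K, ℝ) →ₗ[ℝ] ℝ :=
      { toFun := fun c => x' (m c x)
        map_add' := fun c d => by
          show x' (m (c + d) x) = x' (m c x) + x' (m d x)
          rw [map_add, ContinuousLinearMap.add_apply, map_add]
        map_smul' := fun r c => by
          show x' (m (r • c) x) = r • x' (m c x)
          rw [map_smul, ContinuousLinearMap.smul_apply, map_smul] }
    have hTb : ∀ c, ‖T c‖ ≤ (‖x'‖ * ‖x‖) * ‖c‖ := by
      intro c
      calc ‖x' (m c x)‖ ≤ ‖x'‖ * ‖m c x‖ := ContinuousLinearMap.le_opNorm _ _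
        _ ≤ ‖x'‖ * (‖m c‖ * ‖x‖) :=
            mul_le_mul_of_nonneg_left (ContinuousLinearMap.le_opNorm _ _) (norm_nonneg _)
        _ = (‖x'‖ * ‖x‖) * ‖c‖ := by rw [hm]; ring
    refine ⟨T.mkContinuous (‖x'‖ * ‖x‖) hTb, ?_, fun c => rfl⟩
    intro S hSne hdir b hlub
    have hT := keyTendsto m hm hBade S hSne hdir b hlub x
    have := (x'.continuous.tendsto _).comp hT
    exact this
  constructor
  · intro a ha
    have hma : m a ≠ 0 := by
      intro h
      apply ha
      have := hm a
      rw [h, norm_zero] at this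
      exact norm_eq_zero.mp this.symm
    obtain ⟨x, hx⟩ : ∃ x, m a x ≠ 0 := by
      by_contra h
      push_neg at h
      exact hma (ContinuousLinearMap.ext fun x => by simp [h x])
    obtain ⟨x', -, hx'⟩ := exists_dual_vector ℝ (m a x) (norm_ne_zero_iff.mpr hx)
    obtain ⟨φ, hφ, hφeq⟩ := hkey x x'
    refine ⟨φ, hφ, ?_⟩
    rw [hφeq, hx']
    simpa using norm_ne_zero_iff.mpr hx
  · intro ι _ f a hyp x x'
    obtain ⟨φ, hφ, hφeq⟩ := hkey x x'
    have := hyp φ hφ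
    simpa [hφeq] using this
end

section
/- Containing no closed subspace isomorphic to ℓ∞ is a three-space property: if Y is a closed subspace of a Banach space X such that neither Y nor the quotient X/Y contains a closed subspace isomorphic to ℓ∞, then X contains no closed subspace isomorphic to ℓ∞. -/
open Filter Topology

/-- A Banach space `E` contains a copy of `ℓ∞` if there is a continuous linear embedding
of `ℓ∞` into `E` which is bounded below (hence an isomorphism onto its closed range). -/
def ContainsLinfty (E : Type*) [NormedAddCommGroup E] [NormedSpace ℝ E] : Prop :=
  ∃ T : lp (fun _ : ℕ => ℝ) ⊤ →L[ℝ] E, ∃ c > (0 : ℝ),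
    ∀ f : lp (fun _ : ℕ => ℝ) ⊤, c * ‖f‖ ≤ ‖T f‖

set_option maxHeartbeats 2000000
set_option synthInstance.maxHeartbeats 400000

noncomputable section
open Set Classical Filter Topology

abbrev Linf := lp (fun _ : ℕ => ℝ) ⊤

namespace TSP

/-- Build an element of ℓ∞ from a bounded function. -/
def mkL (f : ℕ → ℝ) (C : ℝ) (h : ∀ n, |f n| ≤ C) : Linf :=
  ⟨f, memℓp_infty ⟨C, by rintro r ⟨n, rfl⟩; simpa using h n⟩⟩

@[simp] lemma mkL_apply (f : ℕ → ℝ) (C : ℝ) (h : ∀ n, |f n| ≤ C) (n : ℕ) :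
    (mkL f C h : ℕ → ℝ) n = f n := rfl

lemma norm_le (x : Linf) {C : ℝ} (hC : 0 ≤ C) (h : ∀ n, |x n| ≤ C) : ‖x‖ ≤ C :=
  lp.norm_le_of_forall_le hC (by simpa using h)

lemma apply_le (x : Linf) (n : ℕ) : |x n| ≤ ‖x‖ := by
  have := lp.norm_apply_le_norm (ENNReal.top_ne_zero) x n
  rwa [Real.norm_eq_abs] at this

lemma norm_mkL_le (f : ℕ → ℝ) (C : ℝ) (hC : 0 ≤ C) (h : ∀ n, |f n| ≤ C) :
    ‖mkL f C h‖ ≤ C := norm_le _ hC (by simpa using h)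

/-- the indicator of a set, as an element of ℓ∞ -/
def ind (E : Set ℕ) : Linf :=
  mkL (fun n => if n ∈ E then 1 else 0) 1 (by intro n; split <;> simp)

@[simp] lemma ind_apply (E : Set ℕ) (n : ℕ) :
    (ind E : ℕ → ℝ) n = if n ∈ E then 1 else 0 := rfl

lemma norm_ind_le (E : Set ℕ) : ‖ind E‖ ≤ 1 :=
  norm_mkL_le _ _ zero_le_one _

@[simp] lemma ind_empty : ind (∅ : Set ℕ) = 0 := by
  apply Subtype.ext; funext n; simp [ind]

lemma ind_union (E F : Set ℕ) (h : Disjoint E F) : ind (E ∪ F) = ind E + ind F := by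
  apply Subtype.ext; funext n
  have hn : ¬(n ∈ E ∧ n ∈ F) := fun ⟨h1, h2⟩ => (h.le_bot ⟨h1, h2⟩ : n ∈ (∅ : Set ℕ))
  simp only [lp.coeFn_add, Pi.add_apply, ind_apply, Set.mem_union]
  by_cases h1 : n ∈ E <;> by_cases h2 : n ∈ F <;> simp [h1, h2] <;> tauto

/-- unit coordinate vector -/
def e (k : ℕ) : Linf := ind {k}

@[simp] lemma e_apply (k n : ℕ) : (e k : ℕ → ℝ) n = if n = k then 1 else 0 := by
  simp [e, Set.mem_singleton_iff]


/-! ### Composition operators ℓ∞ → ℓ∞ given by a partial reindexing -/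

def phiFun (κ : ℕ → Option ℕ) (a : Linf) : ℕ → ℝ :=
  fun n => (κ n).elim 0 (fun k => a k)

lemma phiFun_abs_le (κ : ℕ → Option ℕ) (a : Linf) (n : ℕ) : |phiFun κ a n| ≤ ‖a‖ := by
  unfold phiFun
  cases h : κ n with
  | none => simpa using norm_nonneg a
  | some k => simpa using apply_le a k

def phiPre (κ : ℕ → Option ℕ) : Linf →ₗ[ℝ] Linf where
  toFun a := mkL (phiFun κ a) ‖a‖ (phiFun_abs_le κ a)
  map_add' a b := by
    apply Subtype.ext; funext n
    simp only [mkL_apply, lp.coeFn_add, Pi.add_apply, phiFun]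
    cases κ n <;> simp
  map_smul' c a := by
    apply Subtype.ext; funext n
    simp only [mkL_apply, lp.coeFn_smul, Pi.smul_apply, phiFun, RingHom.id_apply]
    cases κ n <;> simp

def phi (κ : ℕ → Option ℕ) : Linf →L[ℝ] Linf :=
  LinearMap.mkContinuous (phiPre κ) 1 (by
    intro a
    rw [one_mul]
    exact norm_mkL_le (phiFun κ a) ‖a‖ (norm_nonneg a) (phiFun_abs_le κ a))

@[simp] lemma phi_apply (κ : ℕ → Option ℕ) (a : Linf) (n : ℕ) :
    (phi κ a : ℕ → ℝ) n = (κ n).elim 0 (fun k => a k) := rfl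

lemma norm_phi_le (κ : ℕ → Option ℕ) (a : Linf) : ‖phi κ a‖ ≤ ‖a‖ :=
  norm_mkL_le (phiFun κ a) ‖a‖ (norm_nonneg a) (phiFun_abs_le κ a)

/-- If every index is hit, `phi κ` is an isometry. -/
lemma norm_phi_eq (κ : ℕ → Option ℕ) (hsurj : ∀ k, ∃ n, κ n = some k) (a : Linf) :
    ‖phi κ a‖ = ‖a‖ := by
  refine le_antisymm (norm_phi_le κ a) ?_
  refine norm_le a (norm_nonneg _) (fun k => ?_)
  obtain ⟨n, hn⟩ := hsurj k
  have : (phi κ a : ℕ → ℝ) n = a k := by simp [hn]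
  calc |a k| = |(phi κ a : ℕ → ℝ) n| := by rw [this]
    _ ≤ ‖phi κ a‖ := apply_le _ n

/-- canonical partial inverse associated to a disjoint family of sets -/
def kappa (C : ℕ → Set ℕ) : ℕ → Option ℕ :=
  fun n => if h : ∃ k, n ∈ C k then some (Classical.choose h) else none

lemma kappa_eq_some {C : ℕ → Set ℕ} (hC : Pairwise (Function.onFun Disjoint C))
    {n k : ℕ} (hn : n ∈ C k) : kappa C n = some k := by
  unfold kappa
  have h : ∃ j, n ∈ C j := ⟨k, hn⟩
  rw [dif_pos h]
  congr 1
  by_contra hne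
  exact Set.disjoint_left.mp (hC hne) (Classical.choose_spec h) hn

lemma kappa_eq_none {C : ℕ → Set ℕ} {n : ℕ} (hn : ∀ k, n ∉ C k) : kappa C n = none := by
  unfold kappa
  rw [dif_neg]
  rintro ⟨k, hk⟩; exact hn k hk

lemma phi_kappa_e {C : ℕ → Set ℕ} (hC : Pairwise (Function.onFun Disjoint C)) (k : ℕ) :
    phi (kappa C) (e k) = ind (C k) := by
  apply Subtype.ext; funext n
  simp only [phi_apply, ind_apply]
  by_cases hn : ∃ j, n ∈ C j
  · obtain ⟨j, hj⟩ := hn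
    rw [kappa_eq_some hC hj]
    by_cases hjk : j = k
    · subst hjk; simp [hj]
    · have : n ∉ C k := fun hk => Set.disjoint_left.mp (hC hjk) hj hk
      simp [this, hjk]
  · push_neg at hn
    rw [kappa_eq_none hn]
    simp [hn k]

lemma phi_kappa_supp {C : ℕ → Set ℕ} (a : Linf) {n : ℕ} (hn : ∀ k, n ∉ C k) :
    (phi (kappa C) a : ℕ → ℝ) n = 0 := by
  simp [kappa_eq_none hn]

lemma phi_kappa_ind {C : ℕ → Set ℕ} (hC : Pairwise (Function.onFun Disjoint C)) (E : Set ℕ) :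
    phi (kappa C) (ind E) = ind (⋃ k ∈ E, C k) := by
  apply Subtype.ext; funext n
  simp only [phi_apply, ind_apply]
  by_cases hn : ∃ j, n ∈ C j
  · obtain ⟨j, hj⟩ := hn
    rw [kappa_eq_some hC hj]
    by_cases hjE : j ∈ E
    · have : n ∈ ⋃ k ∈ E, C k := Set.mem_biUnion hjE hj
      simp [hjE, this]
    · have : n ∉ ⋃ k ∈ E, C k := by
        simp only [Set.mem_iUnion, not_exists]
        intro i hiE hni
        by_cases hij : i = j
        · exact hjE (hij ▸ hiE)
        · exact Set.disjoint_left.mp (hC hij) hni hj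
      simp [hjE, this]
  · push_neg at hn
    rw [kappa_eq_none hn]
    have : n ∉ ⋃ k ∈ E, C k := by
      simp only [Set.mem_iUnion, not_exists]
      exact fun i _ => hn i
    simp [this]

end TSP

namespace TSP

variable {Z : Type*} [NormedAddCommGroup Z] [NormedSpace ℝ Z]

/-- An operator on ℓ∞ which kills all indicator functions is zero. -/
lemma eq_zero_of_vanish_ind (W : Linf →L[ℝ] Z) (h : ∀ E : Set ℕ, W (ind E) = 0)
    (a : Linf) : W a = 0 := by
  have key : ∀ N : ℕ, ‖W a‖ ≤ ‖W‖ * (1 / (N + 1)) := by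
    intro N
    set m : ℝ := (N : ℝ) + 1 with hm
    have hmpos : (0:ℝ) < m := by positivity
    set C : ℤ := ⌈m * ‖a‖⌉ with hC
    set Ev : ℤ → Set ℕ := fun v => {n | ⌊m * a n⌋ = v} with hEv
    set s : Linf := ∑ v ∈ Finset.Icc (-C) C, ((v : ℝ)/m) • ind (Ev v) with hs
    have hWs : W s = 0 := by
      rw [hs, map_sum]
      apply Finset.sum_eq_zero
      intro v _
      rw [map_smul, h (Ev v), smul_zero]
    have hsn : ∀ n : ℕ, (s : ℕ → ℝ) n = (⌊m * a n⌋ : ℝ)/m := by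
      intro n
      have hmem : ⌊m * a n⌋ ∈ Finset.Icc (-C) C := by
        rw [Finset.mem_Icc]
        constructor
        · have h1 : -(m * ‖a‖) ≤ m * a n := by
            have := apply_le a n
            have h2 : -‖a‖ ≤ a n := neg_le_of_abs_le this
            nlinarith
          calc -C = -⌈m * ‖a‖⌉ := by rw [hC]
            _ = ⌊-(m * ‖a‖)⌋ := by rw [Int.floor_neg]
            _ ≤ ⌊m * a n⌋ := Int.floor_mono h1
        · have h1 : m * a n ≤ m * ‖a‖ := by
            have := apply_le a n
            have h2 : a n ≤ ‖a‖ := le_of_abs_le this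
            nlinarith
          calc ⌊m * a n⌋ ≤ ⌊m * ‖a‖⌋ := Int.floor_mono h1
            _ ≤ ⌈m * ‖a‖⌉ := Int.floor_le_ceil _
      have := lp.coeFn_sum (fun v : ℤ => ((v : ℝ)/m) • ind (Ev v)) (Finset.Icc (-C) C)
      rw [hs]
      rw [congrFun (this) n]
      rw [Finset.sum_apply]
      rw [Finset.sum_eq_single_of_mem (⌊m * a n⌋) hmem]
      · have hn : n ∈ Ev ⌊m * a n⌋ := by simp [hEv]
        simp only [lp.coeFn_smul, Pi.smul_apply, ind_apply, hn, if_pos, smul_eq_mul, mul_one]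
      · intro v _ hv
        have hn : n ∉ Ev v := by simp [hEv]; exact fun hh => hv (hh ▸ rfl)
        simp only [lp.coeFn_smul, Pi.smul_apply, ind_apply, hn, if_neg, smul_eq_mul, mul_zero]
        simp [hn]
    have hdiff : ‖a - s‖ ≤ 1/m := by
      apply norm_le
      · positivity
      · intro n
        have : ((a - s : Linf) : ℕ → ℝ) n = a n - (⌊m * a n⌋ : ℝ)/m := by
          rw [lp.coeFn_sub, Pi.sub_apply, hsn n]
        rw [this]
        have h1 : (⌊m * a n⌋ : ℝ) ≤ m * a n := Int.floor_le _
        have h2 : m * a n < (⌊m * a n⌋ : ℝ) + 1 := Int.lt_floor_add_one _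
        have e1 : (a n : ℝ) - (⌊m * a n⌋ : ℝ)/m = (m * a n - ⌊m * a n⌋)/m := by
          rw [sub_div]
          congr 1
          rw [mul_comm, mul_div_assoc, div_self (ne_of_gt hmpos), mul_one]
        rw [e1, abs_of_nonneg (by
          apply div_nonneg _ (le_of_lt hmpos)
          linarith)]
        rw [div_le_div_iff_of_pos_right hmpos]
        linarith
    calc ‖W a‖ = ‖W (a - s)‖ := by rw [map_sub, hWs, sub_zero]
      _ ≤ ‖W‖ * ‖a - s‖ := W.le_opNorm _
      _ ≤ ‖W‖ * (1/m) := by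
          apply mul_le_mul_of_nonneg_left hdiff (norm_nonneg W)
  have hlim : Tendsto (fun N : ℕ => ‖W‖ * (1 / (N + 1))) atTop (𝓝 0) := by
    have := tendsto_one_div_add_atTop_nhds_zero_nat.const_mul ‖W‖
    simpa using this
  have : ‖W a‖ ≤ 0 := le_of_tendsto_of_tendsto tendsto_const_nhds hlim
    (by filter_upwards with N using key N)
  have := norm_nonneg (W a)
  have : ‖W a‖ = 0 := le_antisymm ‹‖W a‖ ≤ 0› this
  exact norm_eq_zero.mp this

end TSP

namespace TSP

/-- abstract family of nonnegative bounded finitely additive set functions on ℕ -/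
structure FAM (lam : ℕ → Set ℕ → ℝ) (K : ℝ) : Prop where
  nonneg : ∀ m E, 0 ≤ lam m E
  addd : ∀ m E F, Disjoint E F → lam m (E ∪ F) = lam m E + lam m F
  bdd : ∀ m E, lam m E ≤ K

namespace FAM

variable {lam : ℕ → Set ℕ → ℝ} {K : ℝ}

lemma empty (h : FAM lam K) (m : ℕ) : lam m ∅ = 0 := by
  have h2 := h.addd m ∅ ∅ (by simp)
  rw [Set.union_empty] at h2
  linarith

lemma mono (h : FAM lam K) (m : ℕ) {E F : Set ℕ} (hEF : E ⊆ F) : lam m E ≤ lam m F := by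
  calc lam m E ≤ lam m E + lam m (F \ E) := by
        have := h.nonneg m (F \ E)
        linarith
    _ = lam m (E ∪ (F \ E)) := (h.addd m E (F \ E) Set.disjoint_sdiff_right).symm
    _ = lam m F := by rw [Set.union_diff_cancel hEF]

lemma subadd (h : FAM lam K) (m : ℕ) (E F : Set ℕ) : lam m (E ∪ F) ≤ lam m E + lam m F := by
  have h1 : E ∪ F = E ∪ (F \ E) := (Set.union_diff_self).symm
  have h2 := h.addd m E (F \ E) Set.disjoint_sdiff_right
  have h3 := h.mono m (Set.diff_subset : F \ E ⊆ F)
  rw [h1, h2]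
  linarith

lemma finsubadd (h : FAM lam K) (m : ℕ) {ι : Type*} (F : Finset ι) (Es : ι → Set ℕ) :
    lam m (⋃ i ∈ F, Es i) ≤ ∑ i ∈ F, lam m (Es i) := by
  classical
  induction F using Finset.induction_on with
  | empty => simp [Set.biUnion_empty, h.empty m]
  | @insert j Fs hnotmem ih =>
    rw [Finset.sum_insert hnotmem, Finset.set_biUnion_insert]
    calc lam m (Es j ∪ ⋃ i ∈ Fs, Es i) ≤ lam m (Es j) + lam m (⋃ i ∈ Fs, Es i) :=
          h.subadd m _ _
      _ ≤ lam m (Es j) + ∑ i ∈ Fs, lam m (Es i) := by linarith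

lemma finadd_ge (h : FAM lam K) (m : ℕ) {ι : Type*} (F : Finset ι) (Es : ι → Set ℕ)
    (hd : ∀ i ∈ F, ∀ j ∈ F, i ≠ j → Disjoint (Es i) (Es j)) :
    ∑ i ∈ F, lam m (Es i) ≤ lam m (⋃ i ∈ F, Es i) := by
  classical
  induction F using Finset.induction_on with
  | empty => simp [Set.biUnion_empty, h.empty m]
  | @insert j Fs hnotmem ih =>
    rw [Finset.sum_insert hnotmem]
    have hd' : ∀ i ∈ Fs, ∀ k ∈ Fs, i ≠ k → Disjoint (Es i) (Es k) := by
      intro i hi k hk hik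
      exact hd i (Finset.mem_insert_of_mem hi) k (Finset.mem_insert_of_mem hk) hik
    have hdisj : Disjoint (Es j) (⋃ i ∈ Fs, Es i) := by
      rw [Set.disjoint_iff_inter_eq_empty]
      ext x
      simp only [Set.mem_inter_iff, Set.mem_iUnion, Set.mem_empty_iff_false, iff_false,
        not_and, not_exists]
      intro hxj i hi
      intro hxi
      have hne : j ≠ i := fun hji => hnotmem (hji ▸ hi)
      exact Set.disjoint_left.mp
        (hd j (Finset.mem_insert_self j Fs) i (Finset.mem_insert_of_mem hi) hne) hxj hxi
    rw [Finset.set_biUnion_insert, h.addd m _ _ hdisj]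
    have := ih hd'
    linarith

end FAM

/-- the fan of a point: the set of measure indices charging it more than η -/
def Fan (lam : ℕ → Set ℕ → ℝ) (m : ℕ) (η : ℝ) : Set ℕ := {z | η < lam z {m}}

lemma witness {lam : ℕ → Set ℕ → ℝ} {K : ℝ} (h : FAM lam K)
    (B : ℕ → Set ℕ) (hdisj : Pairwise (Function.onFun Disjoint B))
    (hinf : ∀ i, (B i).Infinite) {ε' η : ℝ} (hε : 0 < ε') (hη : 0 < η) :
    ∃ (m : ℕ) (g : ℕ → ℕ), m ∈ B 0 ∧ Function.Injective g ∧ (∀ k, g k ≠ 0) ∧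
      lam m (⋃ k, B (g k)) ≤ ε' ∧ ∀ k, ((B (g k)) \ Fan lam m η).Infinite := by
  obtain ⟨P, hP⟩ := exists_nat_gt (K / ε')
  have hK0 : 0 ≤ K := le_trans (h.nonneg 0 ∅) (h.bdd 0 ∅)
  have hPpos : 0 < P := by
    rcases Nat.eq_zero_or_pos P with h0 | h0
    · exfalso
      rw [h0] at hP
      have : (0:ℝ) ≤ K / ε' := div_nonneg hK0 (le_of_lt hε)
      simp at hP
      linarith
    · exact h0
  have hKP : K < P * ε' := by
    rw [div_lt_iff₀ hε] at hP
    exact hP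
  -- the arm functions
  set armf : ℕ → ℕ → ℕ := fun t s => P * (s+1) + t with harmf
  have harm_mod : ∀ t s, t < P → (armf t s) % P = t := by
    intro t s ht
    simp only [harmf]
    rw [Nat.mul_add_mod]
    exact Nat.mod_eq_of_lt ht
  have harm_inj : ∀ t, Function.Injective (armf t) := by
    intro t s s' hss
    simp only [harmf] at hss
    have : P * (s+1) = P * (s'+1) := by omega
    have := Nat.eq_of_mul_eq_mul_left hPpos this
    omega
  have harm_ne : ∀ {t s t' s'}, t < P → t' < P → t ≠ t' → armf t s ≠ armf t' s' := by
    intro t s t' s' ht ht' hne heq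
    apply hne
    rw [← harm_mod t s ht, ← harm_mod t' s' ht', heq]
  have harm_pos : ∀ t s, armf t s ≠ 0 := by
    intro t s
    simp only [harmf]
    have : 0 < P * (s+1) := Nat.mul_pos hPpos (Nat.succ_pos s)
    omega
  -- bad points for arm t
  set Bad : ℕ → Set ℕ := fun t => {m | {s : ℕ | ((B (armf t s)) \ Fan lam m η).Infinite}.Finite}
    with hBad
  have badFinite : ∀ t, (Bad t).Finite := by
    intro t
    by_contra hbad
    have hbadInf : (Bad t).Infinite := hbad
    obtain ⟨FS, hFSsub, hFScard⟩ := hbadInf.exists_subset_card_eq (⌊K/η⌋₊ + 1)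
    -- each m in FS has finite good-s set; find s good for none
    have hfin : (⋃ m ∈ FS, {s : ℕ | ((B (armf t s)) \ Fan lam m η).Infinite}).Finite := by
      apply Set.Finite.biUnion FS.finite_toSet
      intro m hm
      exact hFSsub (Finset.mem_coe.mpr hm)
    obtain ⟨s, hs⟩ := (hfin.infinite_compl).nonempty
    -- for all m ∈ FS : B (armf t s) \ Fan m is finite
    have hforall : ∀ m ∈ FS, ((B (armf t s)) \ Fan lam m η).Finite := by
      intro m hm
      by_contra hcon
      exact hs (Set.mem_iUnion₂_of_mem hm hcon)
    have hUfin : (⋃ m ∈ FS, ((B (armf t s)) \ Fan lam m η)).Finite :=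
      Set.Finite.biUnion FS.finite_toSet hforall
    obtain ⟨z, hz⟩ := ((hinf (armf t s)).diff hUfin).nonempty
    have hzB : z ∈ B (armf t s) := hz.1
    have hzFan : ∀ m ∈ FS, z ∈ Fan lam m η := by
      intro m hm
      by_contra hcon
      exact hz.2 (Set.mem_iUnion₂_of_mem hm ⟨hzB, hcon⟩)
    -- additivity over the finite set FS of singletons
    have hsum : ∑ m ∈ FS, lam z {m} ≤ lam z (⋃ m ∈ FS, {m}) := by
      apply h.finadd_ge z FS (fun m => ({m} : Set ℕ))
      intro i _ j _ hij
      simp [hij]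
    have hlower : (FS.card : ℝ) * η ≤ ∑ m ∈ FS, lam z {m} := by
      calc (FS.card : ℝ) * η = ∑ _m ∈ FS, η := by rw [Finset.sum_const, nsmul_eq_mul]
        _ ≤ ∑ m ∈ FS, lam z {m} := by
            apply Finset.sum_le_sum
            intro m hm
            exact le_of_lt (hzFan m hm)
    have hupper : lam z (⋃ m ∈ FS, {m}) ≤ K := h.bdd z _
    have hcard : (K/η) < (FS.card : ℝ) := by
      rw [hFScard]
      push_cast
      exact Nat.lt_floor_add_one _
    have : K < (FS.card : ℝ) * η := by
      rw [div_lt_iff₀ hη] at hcard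
      linarith
    linarith
  -- pick a point of B 0 avoiding all bad sets
  have hbigfin : (⋃ t ∈ Finset.range P, Bad t).Finite :=
    Set.Finite.biUnion (Finset.range P).finite_toSet (fun t _ => badFinite t)
  obtain ⟨m, hm⟩ := ((hinf 0).diff hbigfin).nonempty
  have hmB0 : m ∈ B 0 := hm.1
  have hmgood : ∀ t, t < P → {s : ℕ | ((B (armf t s)) \ Fan lam m η).Infinite}.Infinite := by
    intro t ht hcon
    exact hm.2 (Set.mem_iUnion₂_of_mem (Finset.mem_range.mpr ht) hcon)
  -- find a light arm
  have hlight : ∃ t, t < P ∧ lam m (⋃ s, B (armf t s)) ≤ ε' := by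
    by_contra hcon
    push_neg at hcon
    have hge : ∀ t ∈ Finset.range P, ε' ≤ lam m (⋃ s, B (armf t s)) := by
      intro t ht
      exact le_of_lt (hcon t (Finset.mem_range.mp ht))
    have hdisjU : ∀ i ∈ Finset.range P, ∀ j ∈ Finset.range P, i ≠ j →
        Disjoint (⋃ s, B (armf i s)) (⋃ s, B (armf j s)) := by
      intro i hi j hj hij
      rw [Set.disjoint_iff_inter_eq_empty]
      ext x
      simp only [Set.mem_inter_iff, Set.mem_iUnion, Set.mem_empty_iff_false, iff_false, not_and]
      rintro ⟨s, hxs⟩ ⟨s', hxs'⟩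
      have hne : armf i s ≠ armf j s' :=
        harm_ne (Finset.mem_range.mp hi) (Finset.mem_range.mp hj) hij
      exact Set.disjoint_left.mp (hdisj hne) hxs hxs'
    have hsum : ∑ t ∈ Finset.range P, lam m (⋃ s, B (armf t s)) ≤
        lam m (⋃ t ∈ Finset.range P, ⋃ s, B (armf t s)) :=
      h.finadd_ge m _ _ hdisjU
    have h1 : (P : ℝ) * ε' ≤ ∑ t ∈ Finset.range P, lam m (⋃ s, B (armf t s)) := by
      calc (P : ℝ) * ε' = ∑ _t ∈ Finset.range P, ε' := by
            rw [Finset.sum_const, Finset.card_range, nsmul_eq_mul]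
        _ ≤ _ := Finset.sum_le_sum hge
    have h2 : lam m (⋃ t ∈ Finset.range P, ⋃ s, B (armf t s)) ≤ K := h.bdd m _
    linarith
  obtain ⟨t, htP, htlight⟩ := hlight
  -- enumerate the good s's
  have hgood := hmgood t htP
  set u : ℕ ↪ {s : ℕ | ((B (armf t s)) \ Fan lam m η).Infinite} := hgood.natEmbedding _
    with hu
  refine ⟨m, fun k => armf t (u k), hmB0, ?_, ?_, ?_, ?_⟩
  · intro k k' hkk
    have h1 : (u k : ℕ) = (u k' : ℕ) := harm_inj t hkk
    exact u.injective (Subtype.ext h1)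
  · intro k
    exact harm_pos t (u k)
  · apply le_trans _ htlight
    apply h.mono
    apply Set.iUnion_subset
    intro k
    exact Set.subset_iUnion (fun s => B (armf t s)) (u k)
  · intro k
    exact (u k).2

/-- state of the recursion -/
structure RS (lam : ℕ → Set ℕ → ℝ) (ε : ℝ) (t : ℕ) where
  B : ℕ → Set ℕ
  m : ℕ → ℕ
  hdisj : Pairwise (Function.onFun Disjoint B)
  hinf : ∀ i, (B i).Infinite
  hout : ∀ s, s < t → (m s) ∉ ⋃ i, B i
  hI1 : ∀ s, s < t → lam (m s) (⋃ i, B i) ≤ ε/4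
  hI3 : ∀ s, s < t → ∀ z ∈ ⋃ i, B i, lam z {m s} ≤ ε/2^(s+3)

lemma step {lam : ℕ → Set ℕ → ℝ} {K : ℝ} (h : FAM lam K) {ε : ℝ} (hε : 0 < ε)
    (t : ℕ) (S : RS lam ε t) :
    ∃ S' : RS lam ε (t+1), (∀ s, s < t → S'.m s = S.m s) ∧ (S'.m t ∈ ⋃ i, S.B i) ∧
      ((⋃ i, S'.B i) ⊆ ⋃ i, S.B i) := by
  have hε4 : 0 < ε/4 := by linarith
  have hη : 0 < ε/2^(t+3) := by positivity
  obtain ⟨mst, g, hmB0, hginj, hgne0, hlight, hfan⟩ :=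
    witness h S.B S.hdisj S.hinf hε4 hη
  set B' : ℕ → Set ℕ := fun i => (S.B (g i)) \ Fan lam mst (ε/2^(t+3)) with hB'
  set m' : ℕ → ℕ := Function.update S.m t mst with hm'
  have hm't : m' t = mst := Function.update_self t mst S.m
  have hm's : ∀ s, s < t → m' s = S.m s := by
    intro s hst
    exact Function.update_of_ne (Nat.ne_of_lt hst) mst S.m
  have hUsub : (⋃ i, B' i) ⊆ ⋃ i, S.B i := by
    apply Set.iUnion_subset
    intro i
    refine subset_trans Set.diff_subset ?_
    exact Set.subset_iUnion S.B (g i)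
  have hUsub2 : (⋃ i, B' i) ⊆ ⋃ k, S.B (g k) := by
    apply Set.iUnion_subset
    intro i
    refine subset_trans Set.diff_subset ?_
    exact Set.subset_iUnion (fun k => S.B (g k)) i
  refine ⟨⟨B', m', ?_, ?_, ?_, ?_, ?_⟩, ?_, ?_, ?_⟩
  · -- disjoint
    intro i j hij
    have : g i ≠ g j := fun hg => hij (hginj hg)
    exact Set.disjoint_of_subset Set.diff_subset Set.diff_subset (S.hdisj this)
  · -- infinite
    intro i
    exact hfan i
  · -- hout
    intro s hs
    rcases Nat.lt_or_ge s t with hst | hst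
    · rw [hm's s hst]
      intro hmem
      exact S.hout s hst (hUsub hmem)
    · have hseq : s = t := by omega
      rw [hseq, hm't]
      intro hmem
      obtain ⟨i, hi⟩ := Set.mem_iUnion.mp hmem
      have h1 : mst ∈ S.B (g i) := hi.1
      have h2 : (0 : ℕ) ≠ g i := fun hgg => (hgne0 i) hgg.symm
      exact Set.disjoint_left.mp (S.hdisj h2) hmB0 h1
  · -- hI1
    intro s hs
    rcases Nat.lt_or_ge s t with hst | hst
    · rw [hm's s hst]
      exact le_trans (h.mono _ hUsub) (S.hI1 s hst)
    · have hseq : s = t := by omega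
      rw [hseq, hm't]
      exact le_trans (h.mono _ hUsub2) hlight
  · -- hI3
    intro s hs z hz
    rcases Nat.lt_or_ge s t with hst | hst
    · rw [hm's s hst]
      exact S.hI3 s hst z (hUsub hz)
    · have hseq : s = t := by omega
      rw [hseq, hm't]
      obtain ⟨i, hi⟩ := Set.mem_iUnion.mp hz
      have : z ∉ Fan lam mst (ε/2^(t+3)) := hi.2
      simp only [Fan, Set.mem_setOf_eq, not_lt] at this
      exact this
  · exact hm's
  · show m' t ∈ ⋃ i, S.B i
    rw [hm't]
    exact Set.mem_iUnion.mpr ⟨0, hmB0⟩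
  · exact hUsub

/-- initial state -/
def init (lam : ℕ → Set ℕ → ℝ) (ε : ℝ) : RS lam ε 0 where
  B := fun i => Set.range (fun k => Nat.pair i k)
  m := fun _ => 0
  hdisj := by
    intro i j hij
    rw [Function.onFun, Set.disjoint_iff_inter_eq_empty]
    ext x
    simp only [Set.mem_inter_iff, Set.mem_range, Set.mem_empty_iff_false, iff_false, not_and]
    rintro ⟨k, rfl⟩ ⟨k', hk'⟩
    have := Nat.pair_eq_pair.mp hk'
    exact hij (this.1.symm)
  hinf := by
    intro i
    apply Set.infinite_range_of_injective
    intro k k' hkk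
    exact (Nat.pair_eq_pair.mp hkk).2
  hout := by intro s hs; omega
  hI1 := by intro s hs; omega
  hI3 := by intro s hs; omega

/-- Rosenthal's lemma. -/
theorem rosenthal {lam : ℕ → Set ℕ → ℝ} {K : ℝ} (h : FAM lam K) {ε : ℝ} (hε : 0 < ε) :
    ∃ A : ℕ → ℕ, Function.Injective A ∧
      ∀ u, lam (A u) ((Set.range A) \ {A u}) ≤ ε := by
  -- build the sequence of states
  let seq : ∀ t, RS lam ε t := fun t =>
    Nat.rec (init lam ε) (fun t' St' => Classical.choose (step h hε t' St')) t
  have hseq : ∀ t, seq (t+1) = Classical.choose (step h hε t (seq t)) := fun t => rfl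
  have hspec : ∀ t, (∀ s, s < t → (seq (t+1)).m s = (seq t).m s) ∧
      ((seq (t+1)).m t ∈ ⋃ i, (seq t).B i) ∧ ((⋃ i, (seq (t+1)).B i) ⊆ ⋃ i, (seq t).B i) :=
    fun t => Classical.choose_spec (step h hε t (seq t))
  set A : ℕ → ℕ := fun u => (seq (u+1)).m u with hA
  -- coherence
  have hcoh : ∀ u w, u < w → (seq w).m u = A u := by
    intro u w huw
    induction w with
    | zero => omega
    | succ w' ih =>
      rcases Nat.lt_or_ge u w' with hw | hw
      · rw [(hspec w').1 u hw, ih hw]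
      · have : u = w' := by omega
        subst this
        rfl
  have hUchain : ∀ u w, u ≤ w → (⋃ i, (seq w).B i) ⊆ ⋃ i, (seq u).B i := by
    intro u w huw
    induction w with
    | zero =>
      have : u = 0 := by omega
      subst this; exact subset_rfl
    | succ w' ih =>
      rcases Nat.lt_or_ge u (w'+1) with hw | hw
      · have h1 : u ≤ w' := by omega
        exact subset_trans (hspec w').2.2 (ih h1)
      · have : u = w' + 1 := by omega
        subst this; exact subset_rfl
  have hmem : ∀ u, A u ∈ ⋃ i, (seq u).B i := fun u => (hspec u).2.1
  have hinj : Function.Injective A := by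
    intro u w huw
    by_contra hne
    rcases Nat.lt_or_ge u w with h1 | h1
    · have h2 : (seq w).m u = A u := hcoh u w h1
      have h3 : (seq w).m u ∉ ⋃ i, (seq w).B i := (seq w).hout u h1
      rw [h2, huw] at h3
      exact h3 (hmem w)
    · have h1' : w < u := by omega
      have h2 : (seq u).m w = A w := hcoh w u h1'
      have h3 : (seq u).m w ∉ ⋃ i, (seq u).B i := (seq u).hout w h1'
      rw [h2, ← huw] at h3
      exact h3 (hmem u)
  refine ⟨A, hinj, ?_⟩
  intro u
  -- split range A \ {A u} into past and future
  have hsplit : (Set.range A) \ {A u} ⊆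
      (⋃ s ∈ Finset.range u, ({A s} : Set ℕ)) ∪ (⋃ i, (seq (u+1)).B i) := by
    rintro x ⟨⟨w, rfl⟩, hxne⟩
    have hwu : w ≠ u := fun hh => hxne (by rw [hh]; exact Set.mem_singleton _)
    rcases Nat.lt_or_ge w u with hw | hw
    · left
      exact Set.mem_iUnion₂_of_mem (Finset.mem_range.mpr hw) rfl
    · right
      have hw' : u + 1 ≤ w := by omega
      exact hUchain (u+1) w hw' (hmem w)
  have h1 : lam (A u) ((Set.range A) \ {A u}) ≤
      lam (A u) (⋃ s ∈ Finset.range u, ({A s} : Set ℕ)) + lam (A u) (⋃ i, (seq (u+1)).B i) :=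
    le_trans (h.mono _ hsplit) (h.subadd _ _ _)
  have h2 : lam (A u) (⋃ i, (seq (u+1)).B i) ≤ ε/4 := by
    have := (seq (u+1)).hI1 u (Nat.lt_succ_self u)
    rw [hcoh u (u+1) (Nat.lt_succ_self u)] at this
    exact this
  have h3 : lam (A u) (⋃ s ∈ Finset.range u, ({A s} : Set ℕ)) ≤
      ∑ s ∈ Finset.range u, lam (A u) {A s} :=
    h.finsubadd _ _ _
  have h4 : ∀ s ∈ Finset.range u, lam (A u) {A s} ≤ ε/2^(s+3) := by
    intro s hs
    have hsu : s < u := Finset.mem_range.mp hs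
    have := (seq u).hI3 s hsu (A u) (hmem u)
    rw [hcoh s u hsu] at this
    exact this
  have h5 : ∑ s ∈ Finset.range u, lam (A u) {A s} ≤ ε/4 := by
    calc ∑ s ∈ Finset.range u, lam (A u) {A s} ≤ ∑ s ∈ Finset.range u, ε/2^(s+3) :=
          Finset.sum_le_sum h4
      _ = (ε/8) * ∑ s ∈ Finset.range u, (1/2:ℝ)^s := by
          rw [Finset.mul_sum]
          apply Finset.sum_congr rfl
          intro s _
          rw [pow_add]
          rw [div_pow, one_pow]
          rw [div_eq_mul_inv, div_eq_mul_inv, div_eq_mul_inv, mul_inv]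
          ring
      _ ≤ (ε/8) * 2 := by
          apply mul_le_mul_of_nonneg_left (sum_geometric_two_le u) (by linarith)
      _ = ε/4 := by ring
  linarith

end TSP

namespace TSP

variable {Z : Type*} [NormedAddCommGroup Z] [NormedSpace ℝ Z]

/-- restriction of an ℓ∞ sequence to a set of coordinates -/
def restr (E : Set ℕ) (a : Linf) : Linf :=
  mkL (fun n => if n ∈ E then a n else 0) ‖a‖ (by
    intro n
    dsimp only
    split
    · exact apply_le a n
    · simpa using norm_nonneg a)

@[simp] lemma restr_apply (E : Set ℕ) (a : Linf) (n : ℕ) :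
    (restr E a : ℕ → ℝ) n = if n ∈ E then a n else 0 := rfl

lemma norm_restr_le (E : Set ℕ) (a : Linf) : ‖restr E a‖ ≤ ‖a‖ :=
  norm_mkL_le _ _ (norm_nonneg a) _

lemma restr_add_restr {E F : Set ℕ} (hEF : Disjoint E F) (a : Linf)
    (ha : ∀ n, n ∉ E ∪ F → a n = 0) : a = restr E a + restr F a := by
  apply Subtype.ext; funext n
  simp only [lp.coeFn_add, Pi.add_apply, restr_apply]
  by_cases h1 : n ∈ E
  · have h2 : n ∉ F := fun h2 => Set.disjoint_left.mp hEF h1 h2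
    simp [h1, h2]
  · by_cases h2 : n ∈ F
    · simp [h1, h2]
    · have := ha n (by simp [h1, h2])
      simp [h1, h2, this]

/-- the set of absolute values of `w k (G a)` over the unit ball of ℓ∞(E) -/
def lamSet (G : Linf →L[ℝ] Z) (w : ℕ → Z →L[ℝ] ℝ) (k : ℕ) (E : Set ℕ) : Set ℝ :=
  {r | ∃ a : Linf, ‖a‖ ≤ 1 ∧ (∀ n, n ∉ E → a n = 0) ∧ r = |w k (G a)|}

def lam (G : Linf →L[ℝ] Z) (w : ℕ → Z →L[ℝ] ℝ) (k : ℕ) (E : Set ℕ) : ℝ :=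
  sSup (lamSet G w k E)

variable (G : Linf →L[ℝ] Z) (w : ℕ → Z →L[ℝ] ℝ)

lemma lamSet_zero_mem (k : ℕ) (E : Set ℕ) : (0:ℝ) ∈ lamSet G w k E := by
  refine ⟨0, by simp, ?_, by simp⟩
  intro n _
  simp

lemma lamSet_nonempty (k : ℕ) (E : Set ℕ) : (lamSet G w k E).Nonempty :=
  ⟨0, lamSet_zero_mem G w k E⟩

lemma lamSet_bdd (hw : ∀ k, ‖w k‖ ≤ 1) (k : ℕ) (E : Set ℕ) :
    ∀ r ∈ lamSet G w k E, r ≤ ‖G‖ := by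
  rintro r ⟨a, ha1, _, rfl⟩
  calc |w k (G a)| ≤ ‖w k‖ * ‖G a‖ := (w k).le_opNorm _
    _ ≤ 1 * (‖G‖ * ‖a‖) := by
        apply mul_le_mul (hw k) (G.le_opNorm a) (norm_nonneg _) zero_le_one
    _ = ‖G‖ * ‖a‖ := by ring
    _ ≤ ‖G‖ * 1 := by
        apply mul_le_mul_of_nonneg_left ha1 (norm_nonneg G)
    _ = ‖G‖ := by ring

lemma lamSet_bddAbove (hw : ∀ k, ‖w k‖ ≤ 1) (k : ℕ) (E : Set ℕ) :
    BddAbove (lamSet G w k E) := ⟨‖G‖, fun r hr => lamSet_bdd G w hw k E r hr⟩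

/-- |u| + |v| is |u+v| or |u-v| -/
lemma abs_add_or (u v : ℝ) : |u| + |v| = |u + v| ∨ |u| + |v| = |u - v| := by
  rcases le_or_gt 0 u with hu | hu <;> rcases le_or_gt 0 v with hv | hv
  · left; rw [abs_of_nonneg hu, abs_of_nonneg hv, abs_of_nonneg (by linarith)]
  · right; rw [abs_of_nonneg hu, abs_of_neg hv, abs_of_nonneg (by linarith)]; ring
  · right; rw [abs_of_neg hu, abs_of_nonneg hv, abs_of_nonpos (by linarith)]; ring
  · left; rw [abs_of_neg hu, abs_of_neg hv, abs_of_neg (by linarith)]; ring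

lemma lam_FAM (hw : ∀ k, ‖w k‖ ≤ 1) : FAM (lam G w) ‖G‖ := by
  constructor
  · intro k E
    exact le_csSup (lamSet_bddAbove G w hw k E) (lamSet_zero_mem G w k E)
  · intro k E F hEF
    apply le_antisymm
    · apply csSup_le (lamSet_nonempty G w k _)
      rintro r ⟨a, ha1, ha2, rfl⟩
      have hsplit := restr_add_restr hEF a ha2
      have h1 : |w k (G a)| ≤ |w k (G (restr E a))| + |w k (G (restr F a))| := by
        conv_lhs => rw [hsplit]
        rw [map_add, map_add]
        exact abs_add_le _ _
      have h2 : |w k (G (restr E a))| ≤ lam G w k E := by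
        apply le_csSup (lamSet_bddAbove G w hw k E)
        exact ⟨restr E a, le_trans (norm_restr_le E a) ha1, by
          intro n hn; simp [hn], rfl⟩
      have h3 : |w k (G (restr F a))| ≤ lam G w k F := by
        apply le_csSup (lamSet_bddAbove G w hw k F)
        exact ⟨restr F a, le_trans (norm_restr_le F a) ha1, by
          intro n hn; simp [hn], rfl⟩
      linarith
    · have key : ∀ r ∈ lamSet G w k E, ∀ r' ∈ lamSet G w k F,
          r + r' ≤ lam G w k (E ∪ F) := by
        rintro r ⟨a, ha1, ha2, rfl⟩ r' ⟨b, hb1, hb2, rfl⟩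
        rcases abs_add_or (w k (G a)) (w k (G b)) with hor | hor
        · apply le_csSup (lamSet_bddAbove G w hw k _)
          refine ⟨a + b, ?_, ?_, ?_⟩
          · apply norm_le _ zero_le_one
            intro n
            rw [lp.coeFn_add, Pi.add_apply]
            by_cases hE : n ∈ E
            · have hF : n ∉ F := fun hF => Set.disjoint_left.mp hEF hE hF
              rw [hb2 n hF, add_zero]
              exact le_trans (apply_le a n) ha1
            · rw [ha2 n hE, zero_add]
              exact le_trans (apply_le b n) hb1
          · intro n hn
            rw [lp.coeFn_add, Pi.add_apply, ha2 n (fun h => hn (Or.inl h)),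
              hb2 n (fun h => hn (Or.inr h)), add_zero]
          · rw [map_add, map_add]
            exact hor
        · apply le_csSup (lamSet_bddAbove G w hw k _)
          refine ⟨a - b, ?_, ?_, ?_⟩
          · apply norm_le _ zero_le_one
            intro n
            rw [lp.coeFn_sub, Pi.sub_apply]
            by_cases hE : n ∈ E
            · have hF : n ∉ F := fun hF => Set.disjoint_left.mp hEF hE hF
              rw [hb2 n hF, sub_zero]
              exact le_trans (apply_le a n) ha1
            · rw [ha2 n hE, zero_sub, abs_neg]
              exact le_trans (apply_le b n) hb1
          · intro n hn
            rw [lp.coeFn_sub, Pi.sub_apply, ha2 n (fun h => hn (Or.inl h)),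
              hb2 n (fun h => hn (Or.inr h)), sub_zero]
          · rw [map_sub, map_sub]
            exact hor
      have h1 : ∀ r ∈ lamSet G w k E, lam G w k F ≤ lam G w k (E ∪ F) - r := by
        intro r hr
        apply csSup_le (lamSet_nonempty G w k F)
        intro r' hr'
        have := key r hr r' hr'
        linarith
      have h2 : lam G w k E ≤ lam G w k (E ∪ F) - lam G w k F := by
        apply csSup_le (lamSet_nonempty G w k E)
        intro r hr
        have := h1 r hr
        linarith
      linarith
  · intro k E
    apply csSup_le (lamSet_nonempty G w k E)
    exact lamSet_bdd G w hw k E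

/-- fundamental estimate -/
lemma lam_estimate (hw : ∀ k, ‖w k‖ ≤ 1) (k : ℕ) (E : Set ℕ) (a : Linf)
    (ha : ∀ n, n ∉ E → a n = 0) : |w k (G a)| ≤ lam G w k E * ‖a‖ := by
  by_cases h0 : a = 0
  · subst h0
    simp
  · have hn0 : 0 < ‖a‖ := by
      rcases (norm_nonneg a).lt_or_eq with h | h
      · exact h
      · exact absurd (lp.norm_eq_zero_iff.mp h.symm) h0
    set a' : Linf := (‖a‖⁻¹ : ℝ) • a with ha'
    have hnorm : ‖a'‖ ≤ 1 := by
      rw [ha', norm_smul]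
      rw [norm_inv, norm_norm]
      rw [inv_mul_cancel₀ (ne_of_gt hn0)]
    have hsupp : ∀ n, n ∉ E → a' n = 0 := by
      intro n hn
      rw [ha']
      have : ((‖a‖⁻¹ : ℝ) • a : Linf) n = ‖a‖⁻¹ * (a n) := by
        rw [lp.coeFn_smul]
        simp
      rw [this, ha n hn, mul_zero]
    have hmem : |w k (G a')| ∈ lamSet G w k E := ⟨a', hnorm, hsupp, rfl⟩
    have hle : |w k (G a')| ≤ lam G w k E := le_csSup (lamSet_bddAbove G w hw k E) hmem
    have heq : |w k (G a')| = ‖a‖⁻¹ * |w k (G a)| := by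
      rw [ha', map_smul, map_smul]
      rw [smul_eq_mul, abs_mul, abs_inv, abs_norm]
    rw [heq] at hle
    calc |w k (G a)| = ‖a‖ * (‖a‖⁻¹ * |w k (G a)|) := by
          field_simp
      _ ≤ ‖a‖ * lam G w k E := by
          apply mul_le_mul_of_nonneg_left hle (le_of_lt hn0)
      _ = lam G w k E * ‖a‖ := by ring

/-- The machine: a bounded operator whose values on infinitely many disjointly supported
indicators are bounded below produces a copy of ℓ∞ in the target space. -/
theorem machine (S : Linf →L[ℝ] Z) (C : ℕ → Set ℕ)
    (hC : Pairwise (Function.onFun Disjoint C))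
    {δ : ℝ} (hδ : 0 < δ) (hlow : ∀ k, δ ≤ ‖S (ind (C k))‖) : ContainsLinfty Z := by
  set G : Linf →L[ℝ] Z := S.comp (phi (kappa C)) with hG
  have hGe : ∀ k, G (e k) = S (ind (C k)) := by
    intro k
    rw [hG, ContinuousLinearMap.comp_apply, phi_kappa_e hC]
  have hGlow : ∀ k, δ ≤ ‖G (e k)‖ := by
    intro k
    rw [hGe]
    exact hlow k
  have hGne : ∀ k, G (e k) ≠ 0 := by
    intro k hk
    have h := hGlow k
    rw [hk] at h
    simp at h
    linarith
  -- norming functionals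
  have hw_ex : ∀ k, ∃ g : Z →L[ℝ] ℝ, ‖g‖ = 1 ∧ g (G (e k)) = ‖G (e k)‖ := by
    intro k
    exact exists_dual_vector ℝ (G (e k)) (norm_ne_zero_iff.mpr (hGne k))
  set w : ℕ → Z →L[ℝ] ℝ := fun k => Classical.choose (hw_ex k) with hwdef
  have hw1 : ∀ k, ‖w k‖ = 1 := fun k => (Classical.choose_spec (hw_ex k)).1
  have hw2 : ∀ k, w k (G (e k)) = ‖G (e k)‖ := fun k => (Classical.choose_spec (hw_ex k)).2
  have hwle : ∀ k, ‖w k‖ ≤ 1 := fun k => le_of_eq (hw1 k)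
  have hFAM : FAM (lam G w) ‖G‖ := lam_FAM G w hwle
  have hε : (0:ℝ) < δ/4 := by linarith
  obtain ⟨A, hAinj, hA⟩ := rosenthal hFAM hε
  -- the composition with the restriction to the coordinates in A
  set CA : ℕ → Set ℕ := fun u => ({A u} : Set ℕ) with hCA
  have hCAdisj : Pairwise (Function.onFun Disjoint CA) := by
    intro u v huv
    rw [Function.onFun, hCA]
    simp only [Set.disjoint_singleton_left, Set.mem_singleton_iff]
    exact fun h => huv (hAinj h)
  set Ψ := phi (kappa CA) with hΨ
  refine ⟨G.comp Ψ, 3*δ/8, by linarith, ?_⟩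
  intro a
  by_cases h0 : a = 0
  · subst h0
    simp
  · have hn0 : 0 < ‖a‖ := by
      rcases (norm_nonneg a).lt_or_eq with h | h
      · exact h
      · exact absurd (lp.norm_eq_zero_iff.mp h.symm) h0
    -- find a coordinate with large value
    have hbig : ∃ u, (7/8) * ‖a‖ < |a u| := by
      by_contra hcon
      push_neg at hcon
      have : ‖a‖ ≤ (7/8) * ‖a‖ := norm_le a (by positivity) hcon
      linarith
    obtain ⟨u, hu⟩ := hbig
    set b : Linf := Ψ a with hb
    have hbAu : (b : ℕ → ℝ) (A u) = a u := by
      rw [hb, hΨ]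
      have : kappa CA (A u) = some u := kappa_eq_some hCAdisj (by simp [hCA])
      simp [this]
    set r : Linf := b - (a u) • e (A u) with hr
    have hrsupp : ∀ n, n ∉ (Set.range A) \ {A u} → (r : ℕ → ℝ) n = 0 := by
      intro n hn
      simp only [Set.mem_diff, Set.mem_singleton_iff, not_and, not_not] at hn
      rw [hr, lp.coeFn_sub, Pi.sub_apply, lp.coeFn_smul, Pi.smul_apply]
      by_cases hrange : n ∈ Set.range A
      · have hnAu : n = A u := hn hrange
        rw [hnAu, hbAu]
        simp
      · have h1 : (b : ℕ → ℝ) n = 0 := by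
          rw [hb, hΨ]
          have : kappa CA n = none := by
            apply kappa_eq_none
            intro k hk
            rw [hCA] at hk
            exact hrange ⟨k, (Set.mem_singleton_iff.mp hk).symm⟩
          simp [this]
        have h2 : n ≠ A u := fun hh => hrange (hh ▸ ⟨u, rfl⟩)
        rw [h1]
        simp [h2]
    have hrnorm : ‖r‖ ≤ 2 * ‖a‖ := by
      rw [hr]
      calc ‖b - (a u) • e (A u)‖ ≤ ‖b‖ + ‖(a u) • e (A u)‖ := norm_sub_le _ _
        _ ≤ ‖a‖ + ‖a‖ := by
            apply add_le_add
            · rw [hb]; exact norm_phi_le _ a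
            · rw [norm_smul]
              calc ‖a u‖ * ‖e (A u)‖ ≤ ‖a u‖ * 1 := by
                    apply mul_le_mul_of_nonneg_left (norm_ind_le _) (norm_nonneg _)
                _ = |a u| := by rw [mul_one, Real.norm_eq_abs]
                _ ≤ ‖a‖ := apply_le a u
        _ = 2 * ‖a‖ := by ring
    -- the main estimate
    have hwr : |w (A u) (G r)| ≤ (δ/4) * (2 * ‖a‖) := by
      calc |w (A u) (G r)| ≤ lam G w (A u) ((Set.range A) \ {A u}) * ‖r‖ :=
            lam_estimate G w hwle (A u) _ r hrsupp
        _ ≤ (δ/4) * (2 * ‖a‖) := by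
            apply mul_le_mul (hA u) hrnorm (norm_nonneg r)
            linarith
    have hwb : (3*δ/8) * ‖a‖ ≤ |w (A u) (G b)| := by
      have hsplit : G b = G r + (a u) • G (e (A u)) := by
        rw [hr, map_sub, map_smul]
        abel
      have h1 : w (A u) (G b) = w (A u) (G r) + (a u) * w (A u) (G (e (A u))) := by
        rw [hsplit, map_add, map_smul, smul_eq_mul]
      have h2 : |(a u) * w (A u) (G (e (A u)))| = |a u| * ‖G (e (A u))‖ := by
        rw [abs_mul, hw2 (A u)]
        rw [abs_of_nonneg (norm_nonneg _)]
      have h3 : (7/8) * ‖a‖ * δ ≤ |a u| * ‖G (e (A u))‖ := by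
        apply mul_le_mul (le_of_lt hu) (hGlow (A u)) (le_of_lt hδ)
        exact abs_nonneg _
      calc (3*δ/8) * ‖a‖ = (7/8) * ‖a‖ * δ - (δ/4) * (2*‖a‖) := by ring
        _ ≤ |a u| * ‖G (e (A u))‖ - |w (A u) (G r)| := by linarith
        _ = |(a u) * w (A u) (G (e (A u)))| - |w (A u) (G r)| := by rw [h2]
        _ ≤ |w (A u) (G r) + (a u) * w (A u) (G (e (A u)))| := by
            have := abs_add_le (w (A u) (G r)) ((a u) * w (A u) (G (e (A u))))
            have h4 := abs_sub_abs_le_abs_sub ((a u) * w (A u) (G (e (A u))))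
              (-(w (A u) (G r)))
            rw [abs_neg, sub_neg_eq_add] at h4
            calc |(a u) * w (A u) (G (e (A u)))| - |w (A u) (G r)| ≤
                |(a u) * w (A u) (G (e (A u))) + w (A u) (G r)| := h4
              _ = |w (A u) (G r) + (a u) * w (A u) (G (e (A u)))| := by rw [add_comm]
        _ = |w (A u) (G b)| := by rw [h1]
    have hfinal : |w (A u) (G b)| ≤ ‖G b‖ := by
      calc |w (A u) (G b)| ≤ ‖w (A u)‖ * ‖G b‖ := (w (A u)).le_opNorm _
        _ = ‖G b‖ := by rw [hw1]; ring
    calc (3*δ/8) * ‖(a : Linf)‖ ≤ |w (A u) (G b)| := hwb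
      _ ≤ ‖G b‖ := hfinal
      _ = ‖(G.comp Ψ) a‖ := rfl

end TSP

namespace TSP

variable {X : Type*} [NormedAddCommGroup X] [NormedSpace ℝ X]

/-- the quotient map as a continuous linear map -/
def qmap (Y : Submodule ℝ X) : X →L[ℝ] (X ⧸ Y) :=
  LinearMap.mkContinuous Y.mkQ 1 (fun x => by
    rw [one_mul]
    simpa using Submodule.Quotient.norm_mk_le Y x)

@[simp] lemma qmap_apply (Y : Submodule ℝ X) (x : X) :
    qmap Y x = Submodule.Quotient.mk x := rfl

/-- the correction operator given by an absolutely summable sequence -/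
def DopL [CompleteSpace X] (d : ℕ → X) (hd : Summable (fun m => ‖d m‖)) : Linf →L[ℝ] X :=
  LinearMap.mkContinuous
    { toFun := fun a => ∑' m, (a m : ℝ) • d m
      map_add' := by
        intro a b
        have hsa : Summable (fun m => (a m : ℝ) • d m) := by
          apply Summable.of_norm_bounded (hd.mul_left ‖a‖)
          intro m
          rw [norm_smul, Real.norm_eq_abs]
          exact mul_le_mul_of_nonneg_right (apply_le a m) (norm_nonneg _)
        have hsb : Summable (fun m => (b m : ℝ) • d m) := by
          apply Summable.of_norm_bounded (hd.mul_left ‖b‖)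
          intro m
          rw [norm_smul, Real.norm_eq_abs]
          exact mul_le_mul_of_nonneg_right (apply_le b m) (norm_nonneg _)
        have : ∀ m, ((a + b : Linf) m : ℝ) • d m = (a m : ℝ) • d m + (b m : ℝ) • d m := by
          intro m
          rw [lp.coeFn_add, Pi.add_apply, add_smul]
        dsimp only
        rw [tsum_congr this, Summable.tsum_add hsa hsb]
      map_smul' := by
        intro r a
        have hsa : Summable (fun m => (a m : ℝ) • d m) := by
          apply Summable.of_norm_bounded (hd.mul_left ‖a‖)
          intro m
          rw [norm_smul, Real.norm_eq_abs]
          exact mul_le_mul_of_nonneg_right (apply_le a m) (norm_nonneg _)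
        have : ∀ m, ((r • a : Linf) m : ℝ) • d m = r • ((a m : ℝ) • d m) := by
          intro m
          rw [lp.coeFn_smul, Pi.smul_apply, smul_eq_mul, mul_smul]
        dsimp only
        rw [tsum_congr this, RingHom.id_apply]
        exact (hsa.hasSum.const_smul r).tsum_eq }
    (∑' m, ‖d m‖)
    (by
      intro a
      dsimp only [LinearMap.coe_mk, AddHom.coe_mk]
      have hsa : Summable (fun m => ‖(a m : ℝ) • d m‖) := by
        apply Summable.of_nonneg_of_le (fun m => norm_nonneg _) _ (hd.mul_left ‖a‖)
        intro m
        rw [norm_smul, Real.norm_eq_abs]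
        exact mul_le_mul_of_nonneg_right (apply_le a m) (norm_nonneg _)
      calc ‖∑' m, (a m : ℝ) • d m‖ ≤ ∑' m, ‖(a m : ℝ) • d m‖ :=
            norm_tsum_le_tsum_norm hsa
        _ ≤ ∑' m, ‖a‖ * ‖d m‖ := by
            apply Summable.tsum_le_tsum _ hsa (hd.mul_left ‖a‖)
            intro m
            rw [norm_smul, Real.norm_eq_abs]
            exact mul_le_mul_of_nonneg_right (apply_le a m) (norm_nonneg _)
        _ = ‖a‖ * ∑' m, ‖d m‖ := by rw [tsum_mul_left]
        _ = (∑' m, ‖d m‖) * ‖a‖ := by ring)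

lemma DopL_apply [CompleteSpace X] (d : ℕ → X) (hd : Summable (fun m => ‖d m‖)) (a : Linf) :
    DopL d hd a = ∑' m, (a m : ℝ) • d m := rfl

lemma DopL_norm_le [CompleteSpace X] (d : ℕ → X) (hd : Summable (fun m => ‖d m‖)) (a : Linf) :
    ‖DopL d hd a‖ ≤ (∑' m, ‖d m‖) * ‖a‖ := by
  have := (DopL d hd).le_opNorm a
  calc ‖DopL d hd a‖ ≤ ‖DopL d hd‖ * ‖a‖ := this
    _ ≤ (∑' m, ‖d m‖) * ‖a‖ := by
        apply mul_le_mul_of_nonneg_right _ (norm_nonneg a)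
        apply LinearMap.mkContinuous_norm_le _ (tsum_nonneg (fun m => norm_nonneg _))

lemma DopL_e [CompleteSpace X] (d : ℕ → X) (hd : Summable (fun m => ‖d m‖)) (m : ℕ) :
    DopL d hd (e m) = d m := by
  rw [DopL_apply]
  rw [tsum_eq_single m]
  · simp
  · intro k hk
    have : ((e m : Linf) : ℕ → ℝ) k = 0 := by
      simp [hk]
    rw [this, zero_smul]

/-- the sum of unit vectors over a finite set is the indicator -/
lemma ind_finset (F : Finset ℕ) : ind (↑F : Set ℕ) = ∑ j ∈ F, e j := by
  apply Subtype.ext; funext n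
  rw [congrFun (lp.coeFn_sum (fun j => e j) F) n, Finset.sum_apply]
  simp only [ind_apply, e_apply, Finset.mem_coe]
  by_cases hn : n ∈ F
  · rw [Finset.sum_eq_single_of_mem n hn]
    · simp [hn]
    · intro j _ hj
      simp [Ne.symm hj]
  · rw [Finset.sum_eq_zero]
    · simp [hn]
    · intro j hj
      have : n ≠ j := fun hh => hn (hh ▸ hj)
      simp [this]

lemma vanish_on_finite {Z : Type*} [NormedAddCommGroup Z] [NormedSpace ℝ Z]
    (S : Linf →L[ℝ] Z) (hS : ∀ j, S (e j) = 0) {E : Set ℕ} (hE : E.Finite) :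
    S (ind E) = 0 := by
  have : E = (↑hE.toFinset : Set ℕ) := by simp
  rw [this, ind_finset, map_sum]
  apply Finset.sum_eq_zero
  intro j _
  exact hS j

/-- almost disjoint family indexed by ℕ → Bool : prefix codes -/
def adSeq (x : ℕ → Bool) : ℕ → ℕ :=
  fun n => Encodable.encode (List.ofFn (fun i : Fin n => x i))

lemma adSeq_inj (x : ℕ → Bool) : Function.Injective (adSeq x) := by
  intro n m hnm
  have h := Encodable.encode_injective hnm
  have := congrArg List.length h
  simpa using this

lemma adSeq_ad {x y : ℕ → Bool} (hxy : x ≠ y) :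
    (Set.range (adSeq x) ∩ Set.range (adSeq y)).Finite := by
  have hne : ∃ d, x d ≠ y d := by
    by_contra hcon
    push_neg at hcon
    exact hxy (funext hcon)
  obtain ⟨d, hd⟩ := hne
  apply Set.Finite.subset ((Set.finite_Iic d).image (adSeq x))
  rintro v ⟨⟨n, rfl⟩, ⟨m, hm⟩⟩
  have h : List.ofFn (fun i : Fin m => y i) = List.ofFn (fun i : Fin n => x i) :=
    Encodable.encode_injective hm
  have hlen : m = n := by simpa using congrArg List.length h
  subst hlen
  have hfun := List.ofFn_injective h
  have hval : ∀ i : Fin m, y i = x i := fun i => congrFun hfun i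
  have hnd : m ≤ d := by
    by_contra hcon
    push_neg at hcon
    exact hd ((hval ⟨d, hcon⟩).symm)
  exact ⟨m, Set.mem_Iic.mpr hnd, rfl⟩

/-- pigeonhole: a positive function on the uncountable set `ℕ → Bool` is bounded below
on an infinite set -/
lemma exists_infinite_level (σ : (ℕ → Bool) → ℝ) (hσ : ∀ x, 0 < σ x) :
    ∃ n : ℕ, {x : ℕ → Bool | 1/(n+1 : ℝ) < σ x}.Infinite := by
  by_contra hcon
  push_neg at hcon
  have hcover : (Set.univ : Set (ℕ → Bool)) = ⋃ n : ℕ, {x | 1/(n+1 : ℝ) < σ x} := by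
    apply Set.eq_of_subset_of_subset
    · intro x _
      obtain ⟨n, hn⟩ := exists_nat_one_div_lt (hσ x)
      exact Set.mem_iUnion.mpr ⟨n, hn⟩
    · intro x _
      trivial
  have hctble : (Set.univ : Set (ℕ → Bool)).Countable := by
    rw [hcover]
    exact Set.countable_iUnion (fun n => (hcon n).countable)
  have : Countable (ℕ → Bool) := Set.countable_univ_iff.mp hctble
  obtain ⟨f, hf⟩ := exists_surjective_nat (ℕ → Bool)
  obtain ⟨m, hm⟩ := hf (fun n => !(f n n))
  have := congrFun hm m
  simp at this

end TSP

open TSP in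
/-- Not containing a copy of `ℓ∞` is a three-space property. -/
theorem stmt19 {X : Type*} [NormedAddCommGroup X] [NormedSpace ℝ X] [CompleteSpace X]
    (Y : Submodule ℝ X) (hY : IsClosed (Y : Set X))
    (h1 : ¬ ContainsLinfty Y) (h2 : ¬ ContainsLinfty (X ⧸ Y)) :
    ¬ ContainsLinfty X := by
  rintro ⟨T, c, hc, hT⟩
  by_cases hcaseB : ∃ δ > (0:ℝ), {j : ℕ | ‖qmap Y (T (e j))‖ < δ}.Finite
  · -- Case B : the images of unit vectors in the quotient are bounded below on an infinite set.
    obtain ⟨δ, hδ, hfin⟩ := hcaseB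
    have hinf : {j : ℕ | δ ≤ ‖qmap Y (T (e j))‖}.Infinite := by
      have heq : {j : ℕ | δ ≤ ‖qmap Y (T (e j))‖} = {j : ℕ | ‖qmap Y (T (e j))‖ < δ}ᶜ := by
        ext j
        simp [not_lt]
      rw [heq]
      exact hfin.infinite_compl
    set u : ℕ ↪ {j : ℕ | δ ≤ ‖qmap Y (T (e j))‖} := hinf.natEmbedding _ with hu
    apply h2
    apply machine ((qmap Y).comp T) (fun k => ({(u k : ℕ)} : Set ℕ)) ?_ hδ ?_
    · intro k k' hkk
      rw [Function.onFun]
      simp only [Set.disjoint_singleton_left, Set.mem_singleton_iff]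
      intro hh
      exact hkk (u.injective (Subtype.ext hh))
    · intro k
      have h3 : δ ≤ ‖qmap Y (T (e (u k : ℕ)))‖ := (u k).2
      exact h3
  · -- Case A
    push_neg at hcaseB
    set δf : ℕ → ℝ := fun m => c * (1/2)^m / 100 with hδf
    have hδfpos : ∀ m, 0 < δf m := by
      intro m
      rw [hδf]
      positivity
    have hSm : ∀ m, {j : ℕ | ‖qmap Y (T (e j))‖ < δf m}.Infinite := fun m =>
      hcaseB (δf m) (hδfpos m)
    have hstep : ∀ (prev : ℕ) (m : ℕ), ∃ b, ‖qmap Y (T (e b))‖ < δf m ∧ prev < b := by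
      intro prev m
      obtain ⟨b, hb1, hb2⟩ := (hSm m).exists_gt prev
      exact ⟨b, hb1, hb2⟩
    set jf : ℕ → ℕ := fun m =>
      Nat.rec (Classical.choose (hstep 0 0)) (fun m' prev => Classical.choose (hstep prev (m'+1))) m
      with hjf
    have hjfmem : ∀ m, ‖qmap Y (T (e (jf m)))‖ < δf m := by
      intro m
      cases m with
      | zero => exact (Classical.choose_spec (hstep 0 0)).1
      | succ m' => exact (Classical.choose_spec (hstep (jf m') (m'+1))).1
    have hjfmono : StrictMono jf := by
      apply strictMono_nat_of_lt_succ
      intro m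
      exact (Classical.choose_spec (hstep (jf m) (m+1))).2
    -- select good approximations in Y
    have hy_ex : ∀ m, ∃ y : X, y ∈ Y ∧ ‖T (e (jf m)) - y‖ ≤ 2 * δf m := by
      intro m
      obtain ⟨z, hz1, hz2⟩ := Submodule.Quotient.norm_mk_lt
        (Submodule.Quotient.mk (T (e (jf m))) : X ⧸ Y) (hδfpos m)
      refine ⟨T (e (jf m)) - z, ?_, ?_⟩
      · rw [← Submodule.Quotient.mk_eq_zero Y, Submodule.Quotient.mk_sub, hz1, sub_self]
      · have h3 : T (e (jf m)) - (T (e (jf m)) - z) = z := by abel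
        rw [h3]
        have h4 : ‖(Submodule.Quotient.mk (T (e (jf m))) : X ⧸ Y)‖ < δf m := hjfmem m
        linarith
    set yf : ℕ → X := fun m => Classical.choose (hy_ex m) with hyf
    have hyfY : ∀ m, yf m ∈ Y := fun m => (Classical.choose_spec (hy_ex m)).1
    have hyfclose : ∀ m, ‖T (e (jf m)) - yf m‖ ≤ 2 * δf m :=
      fun m => (Classical.choose_spec (hy_ex m)).2
    set dd : ℕ → X := fun m => yf m - T (e (jf m)) with hdd
    have hddnorm : ∀ m, ‖dd m‖ ≤ (c/50) * (1/2)^m := by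
      intro m
      rw [hdd]
      have : ‖yf m - T (e (jf m))‖ = ‖T (e (jf m)) - yf m‖ := norm_sub_rev _ _
      rw [this]
      calc ‖T (e (jf m)) - yf m‖ ≤ 2 * δf m := hyfclose m
        _ = (c/50) * (1/2)^m := by rw [hδf]; ring
    have hsumgeo : Summable (fun m : ℕ => (c/50) * (1/2:ℝ)^m) :=
      summable_geometric_two.mul_left (c/50)
    have hsum : Summable (fun m => ‖dd m‖) :=
      Summable.of_nonneg_of_le (fun m => norm_nonneg _) hddnorm hsumgeo
    have hsum_le : (∑' m, ‖dd m‖) ≤ c/25 := by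
      calc (∑' m, ‖dd m‖) ≤ ∑' m, (c/50) * (1/2:ℝ)^m := Summable.tsum_le_tsum hddnorm hsum hsumgeo
        _ = (c/50) * ∑' m, (1/2:ℝ)^m := tsum_mul_left
        _ = (c/50) * 2 := by rw [tsum_geometric_two]
        _ = c/25 := by ring
    -- the perturbed operator V
    set CJ : ℕ → Set ℕ := fun m => ({jf m} : Set ℕ) with hCJ
    have hCJdisj : Pairwise (Function.onFun Disjoint CJ) := by
      intro i j hij
      rw [Function.onFun, hCJ]
      simp only [Set.disjoint_singleton_left, Set.mem_singleton_iff]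
      exact fun hh => hij (hjfmono.injective hh)
    set Ψ : Linf →L[ℝ] Linf := phi (kappa CJ) with hΨ
    have hΨe : ∀ m, Ψ (e m) = e (jf m) := by
      intro m
      rw [hΨ, phi_kappa_e hCJdisj]
      rfl
    have hΨsurj : ∀ k, ∃ n, kappa CJ n = some k := by
      intro k
      exact ⟨jf k, kappa_eq_some hCJdisj (by rw [hCJ]; exact Set.mem_singleton _)⟩
    have hΨiso : ∀ a, ‖Ψ a‖ = ‖a‖ := fun a => norm_phi_eq _ hΨsurj a
    set V : Linf →L[ℝ] X := (T.comp Ψ) + DopL dd hsum with hV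
    have hVapp : ∀ a, V a = T (Ψ a) + DopL dd hsum a := by
      intro a
      rw [hV, ContinuousLinearMap.add_apply, ContinuousLinearMap.comp_apply]
    have hVe : ∀ m, V (e m) = yf m := by
      intro m
      rw [hVapp, hΨe, DopL_e, hdd]
      dsimp only
      rw [add_comm, sub_add_cancel]
    have hVlow : ∀ a, (c/2) * ‖a‖ ≤ ‖V a‖ := by
      intro a
      have h3 : ‖T (Ψ a)‖ ≤ ‖V a‖ + ‖DopL dd hsum a‖ := by
        have : T (Ψ a) = V a - DopL dd hsum a := by rw [hVapp]; abel
        rw [this]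
        exact norm_sub_le _ _
      have h4 : c * ‖a‖ ≤ ‖T (Ψ a)‖ := by
        have := hT (Ψ a)
        rw [hΨiso] at this
        exact this
      have h5 : ‖DopL dd hsum a‖ ≤ (c/25) * ‖a‖ := by
        calc ‖DopL dd hsum a‖ ≤ (∑' m, ‖dd m‖) * ‖a‖ := DopL_norm_le dd hsum a
          _ ≤ (c/25) * ‖a‖ := mul_le_mul_of_nonneg_right hsum_le (norm_nonneg a)
      have h6 := norm_nonneg a
      have h7 : c * ‖a‖ - (c/25) * ‖a‖ ≤ ‖V a‖ := by linarith
      have h9 : (c/2 + c/25) * ‖a‖ ≤ c * ‖a‖ :=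
        mul_le_mul_of_nonneg_right (by linarith) h6
      rw [add_mul] at h9
      linarith
    clear hV hVapp
    clear_value V
    set S2 : Linf →L[ℝ] (X ⧸ Y) := (qmap Y).comp V with hS2
    have hS2app : ∀ a, S2 a = Submodule.Quotient.mk (V a) := by
      intro a
      rw [hS2, ContinuousLinearMap.comp_apply, qmap_apply]
    clear hS2
    clear_value S2
    have hS2e : ∀ m, S2 (e m) = 0 := by
      intro m
      rw [hS2app, hVe]
      exact (Submodule.Quotient.mk_eq_zero Y).mpr (hyfY m)
    have hS2fin : ∀ E : Set ℕ, E.Finite → S2 (ind E) = 0 :=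
      fun E hE => vanish_on_finite S2 hS2e hE
    -- the almost disjoint family dichotomy
    by_cases hsub : ∃ x : ℕ → Bool, ∀ C : Set ℕ, C ⊆ Set.range (adSeq x) → S2 (ind C) = 0
    · -- Subcase (a) : V maps ℓ∞ of a branch into Y : contradiction with h1
      obtain ⟨x, hx⟩ := hsub
      set Cx : ℕ → Set ℕ := fun k => ({adSeq x k} : Set ℕ) with hCx
      have hCxdisj : Pairwise (Function.onFun Disjoint Cx) := by
        intro i j hij
        rw [Function.onFun, hCx]
        simp only [Set.disjoint_singleton_left, Set.mem_singleton_iff]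
        exact fun hh => hij (adSeq_inj x hh)
      set Φx : Linf →L[ℝ] Linf := phi (kappa Cx) with hΦx
      have hW0 : ∀ E : Set ℕ, S2 (Φx (ind E)) = 0 := by
        intro E
        rw [hΦx, phi_kappa_ind hCxdisj]
        apply hx
        apply Set.iUnion₂_subset
        intro k _
        rw [hCx]
        intro v hv
        rw [Set.mem_singleton_iff] at hv
        exact ⟨k, hv.symm⟩
      have hWa : ∀ a, S2 (Φx a) = 0 := by
        intro a
        have := eq_zero_of_vanish_ind (S2.comp Φx) (fun E => hW0 E) a
        rwa [ContinuousLinearMap.comp_apply] at this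
      have hmemY : ∀ a, V (Φx a) ∈ Y := by
        intro a
        have h3 := hWa a
        rw [hS2app] at h3
        exact (Submodule.Quotient.mk_eq_zero Y).mp h3
      apply h1
      refine ⟨(V.comp Φx).codRestrict Y (fun a => hmemY a), c/2, by linarith, ?_⟩
      intro f
      have h3 : ‖((V.comp Φx).codRestrict Y (fun a => hmemY a)) f‖ = ‖V (Φx f)‖ := rfl
      rw [h3]
      have h4 : ‖Φx f‖ = ‖f‖ := by
        apply norm_phi_eq
        intro k
        exact ⟨adSeq x k, kappa_eq_some hCxdisj (by rw [hCx]; exact Set.mem_singleton _)⟩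
      have := hVlow (Φx f)
      rw [h4] at this
      exact this
    · -- Subcase (b) : on every branch some indicator survives : contradiction with h2
      push_neg at hsub
      have hsub' : ∀ x : ℕ → Bool, ∃ C : Set ℕ, C ⊆ Set.range (adSeq x) ∧ S2 (ind C) ≠ 0 :=
        hsub
      set Cx : (ℕ → Bool) → Set ℕ := fun x => Classical.choose (hsub' x) with hCxb
      have hCx1 : ∀ x, Cx x ⊆ Set.range (adSeq x) := fun x => (Classical.choose_spec (hsub' x)).1
      have hCx2 : ∀ x, S2 (ind (Cx x)) ≠ 0 := fun x => (Classical.choose_spec (hsub' x)).2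
      set σ : (ℕ → Bool) → ℝ := fun x => ‖S2 (ind (Cx x))‖ with hσ
      have hσpos : ∀ x, 0 < σ x := fun x => norm_pos_iff.mpr (hCx2 x)
      obtain ⟨n, hn⟩ := exists_infinite_level σ hσpos
      set xe : ℕ ↪ {x : ℕ → Bool | 1/(n+1 : ℝ) < σ x} := hn.natEmbedding _ with hxe
      have hxedist : ∀ {l m : ℕ}, l ≠ m → (xe l : ℕ → Bool) ≠ (xe m : ℕ → Bool) := by
        intro l m hlm hh
        exact hlm (xe.injective (Subtype.ext hh))
      set Em : ℕ → Set ℕ := fun m =>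
        Cx (xe m) \ ⋃ l ∈ Finset.range m, Set.range (adSeq ((xe l : ℕ → Bool)))
        with hEm
      have hEsub : ∀ m, Em m ⊆ Set.range (adSeq ((xe m : ℕ → Bool))) := by
        intro m
        rw [hEm]
        exact subset_trans Set.diff_subset (hCx1 (xe m))
      have hEdisj : Pairwise (Function.onFun Disjoint Em) := by
        have key : ∀ {l m : ℕ}, l < m → Disjoint (Em l) (Em m) := by
          intro l m hlm
          rw [Set.disjoint_left]
          intro v hvl hvm
          have h3 : v ∈ Set.range (adSeq ((xe l : ℕ → Bool))) := hEsub l hvl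
          rw [hEm] at hvm
          exact hvm.2 (Set.mem_iUnion₂_of_mem (Finset.mem_range.mpr hlm) h3)
        intro l m hlm
        rcases Nat.lt_or_ge l m with h3 | h3
        · exact key h3
        · have h4 : m < l := by omega
          exact (key h4).symm
      have hEeq : ∀ m, S2 (ind (Em m)) = S2 (ind (Cx (xe m))) := by
        intro m
        have hfin : (Cx (xe m) \ Em m).Finite := by
          apply Set.Finite.subset
            (Set.Finite.biUnion (Finset.range m).finite_toSet
              (fun l hl => adSeq_ad (hxedist (fun hh : m = l => by
                have := Finset.mem_range.mp hl
                omega))))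
          rintro v ⟨hvC, hvE⟩
          rw [hEm] at hvE
          simp only [Set.mem_diff, not_and, not_not] at hvE
          have h3 : v ∈ ⋃ l ∈ Finset.range m, Set.range (adSeq ((xe l : ℕ → Bool))) :=
            hvE hvC
          obtain ⟨l, hl, hvl⟩ := Set.mem_iUnion₂.mp h3
          apply Set.mem_iUnion₂_of_mem hl
          exact ⟨hCx1 (xe m) hvC, hvl⟩
        have hEsubC : Em m ⊆ Cx (xe m) := by
          rw [hEm]
          exact Set.diff_subset
        have hsplit : ind (Cx (xe m)) = ind (Em m) + ind (Cx (xe m) \ Em m) := by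
          rw [← ind_union _ _ Set.disjoint_sdiff_right, Set.union_diff_cancel hEsubC]
        rw [hsplit, map_add, hS2fin _ hfin, add_zero]
      apply h2
      have hδn : (0:ℝ) < 1/(n+1 : ℝ) := by positivity
      apply machine S2 Em hEdisj hδn
      intro m
      have h3 : 1/(n+1 : ℝ) < σ (xe m) := (xe m).2
      have h4 : σ ((xe m : ℕ → Bool)) = ‖S2 (ind (Em m))‖ := by
        show ‖S2 (ind (Cx ((xe m : ℕ → Bool))))‖ = ‖S2 (ind (Em m))‖
        rw [hEeq m]
      rw [h4] at h3
      exact le_of_lt h3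
end
end
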